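/- arXiv:2011.00576 — 5 statements merged into one kernel-verified Lean document; each statement's English description precedes it below -/
import Mathlib

section
/- There is a universal constant c > 0 with the following property: for every d ≥ 1 and every nonempty finite set Y ⊆ {0,1}^d with ∪_{x∈Y} supp(x) = {1,…,d}, there exists a probability vector λ on Y such that every diagonal entry of A_semi(λ) is positive and (E_η[ max_{x∈Y} x^⊤ A_semi(λ)^{-1/2} η ])² ≤ c · min( d · log|Y| , d² ). (This is the semi-bandit case of the paper's Proposition 3: it shows the worst-case Gaussian width γ̄(A_semi) is at most c · min(d log|X|, d²).) -/
open MeasureTheory ProbabilityTheory Real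

/-- The standard Gaussian measure `N(0, I_d)` on `ℝ^d`. -/
noncomputable def stdGaussian (d : ℕ) : Measure (Fin d → ℝ) :=
  Measure.pi fun _ => gaussianReal 0 1

namespace GWaux

lemma pdf_meas : Measurable fun x => Real.toNNReal (gaussianPDFReal 0 1 x) :=
  continuous_real_toNNReal.measurable.comp (measurable_gaussianPDFReal 0 1)

lemma gaussianReal_eq :
    gaussianReal 0 1 = (volume : Measure ℝ).withDensity
      fun x => ((gaussianPDFReal 0 1 x).toNNReal : ENNReal) := by
  rw [gaussianReal_of_var_ne_zero 0 one_ne_zero]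
  rfl

lemma integral_gauss_eq (g : ℝ → ℝ) :
    ∫ x, g x ∂gaussianReal 0 1 = ∫ x, gaussianPDFReal 0 1 x * g x := by
  rw [gaussianReal_eq, integral_withDensity_eq_integral_smul pdf_meas]
  refine integral_congr_ae (.of_forall fun x => ?_)
  simp [NNReal.smul_def, Real.coe_toNNReal _ (gaussianPDFReal_nonneg _ _ _)]

lemma integrable_gauss {g : ℝ → ℝ}
    (h : Integrable (fun x => gaussianPDFReal 0 1 x * g x) volume) :
    Integrable g (gaussianReal 0 1) := by
  rw [gaussianReal_eq, integrable_withDensity_iff_integrable_smul pdf_meas]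
  refine h.congr (.of_forall fun x => ?_)
  simp [NNReal.smul_def, Real.coe_toNNReal _ (gaussianPDFReal_nonneg _ _ _)]

lemma pdf_mul_exp (c x : ℝ) :
    gaussianPDFReal 0 1 x * Real.exp (c * x)
      = (Real.sqrt (2 * π))⁻¹ * (Real.exp (c ^ 2 / 2) * Real.exp (-(1/2) * (x - c) ^ 2)) := by
  simp only [gaussianPDFReal, NNReal.coe_one, mul_one, sub_zero]
  rw [mul_assoc, ← Real.exp_add, ← Real.exp_add]
  congr 1
  ring

lemma integrable_exp_gauss (c : ℝ) :
    Integrable (fun x => Real.exp (c * x)) (gaussianReal 0 1) := by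
  apply integrable_gauss
  have : (fun x => gaussianPDFReal 0 1 x * Real.exp (c * x))
      = fun x => (Real.sqrt (2 * π))⁻¹ * (Real.exp (c ^ 2 / 2)
          * Real.exp (-(1/2) * (x - c) ^ 2)) := funext fun x => pdf_mul_exp c x
  rw [this]
  exact (((integrable_exp_neg_mul_sq (by norm_num : (0:ℝ) < 1/2)).comp_sub_right
    c).const_mul _).const_mul _

lemma integral_exp_gauss (c : ℝ) :
    ∫ x, Real.exp (c * x) ∂gaussianReal 0 1 = Real.exp (c ^ 2 / 2) := by
  rw [integral_gauss_eq]
  simp_rw [pdf_mul_exp c]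
  rw [integral_const_mul, integral_const_mul,
    integral_sub_right_eq_self (fun a => Real.exp (-(1/2) * a ^ 2)) c,
    integral_gaussian]
  have h1 : π / (1/2 : ℝ) = 2 * π := by ring
  rw [h1]
  have h2 : Real.sqrt (2 * π) ≠ 0 := by positivity
  field_simp

lemma integrable_id_gauss : Integrable (fun x : ℝ => x) (gaussianReal 0 1) := by
  apply integrable_gauss
  have : (fun x => gaussianPDFReal 0 1 x * x)
      = fun x => (Real.sqrt (2 * π))⁻¹ * (x * Real.exp (-(1/2) * x ^ 2)) := by
    funext x
    simp only [gaussianPDFReal, NNReal.coe_one, mul_one, sub_zero]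
    rw [show -x ^ 2 / 2 = -(1/2) * x ^ 2 by ring]
    ring
  rw [this]
  exact (integrable_mul_exp_neg_mul_sq (by norm_num : (0:ℝ) < 1/2)).const_mul _

lemma integral_id_gauss : ∫ x, x ∂gaussianReal 0 1 = 0 := by
  rw [integral_gauss_eq]
  have key : ∀ x : ℝ, gaussianPDFReal 0 1 (-x) * (-x) = -(gaussianPDFReal 0 1 x * x) := by
    intro x
    simp only [gaussianPDFReal, NNReal.coe_one, mul_one, sub_zero, neg_sq]
    ring
  have h := integral_neg_eq_self (fun x => gaussianPDFReal 0 1 x * x) (volume : Measure ℝ)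
  simp only [key, integral_neg] at h
  linarith

end GWaux

namespace GWaux

lemma integrable_pi_prod {d : ℕ} (f : Fin d → ℝ → ℝ)
    (hf : ∀ i, Integrable (f i) (gaussianReal 0 1)) :
    Integrable (fun η : Fin d → ℝ => ∏ i, f i (η i)) (stdGaussian d) := by
  letI : MeasureSpace ℝ := ⟨gaussianReal 0 1⟩
  haveI : SigmaFinite (volume : Measure ℝ) := inferInstanceAs (SigmaFinite (gaussianReal 0 1))
  exact Integrable.fintype_prod (𝕜 := ℝ) (f := f) hf

lemma integral_pi_prod {d : ℕ} (f : Fin d → ℝ → ℝ) :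
    ∫ η, ∏ i, f i (η i) ∂stdGaussian d = ∏ i, ∫ x, f i x ∂gaussianReal 0 1 := by
  letI : MeasureSpace ℝ := ⟨gaussianReal 0 1⟩
  haveI : SigmaFinite (volume : Measure ℝ) := inferInstanceAs (SigmaFinite (gaussianReal 0 1))
  exact integral_fintype_prod_eq_prod f

lemma integrable_coord {d : ℕ} (i : Fin d) :
    Integrable (fun η : Fin d → ℝ => η i) (stdGaussian d) := by
  classical
  have h := integrable_pi_prod (fun j => if j = i then (fun s : ℝ => s) else fun _ => 1)
    (fun j => by
      by_cases h : j = i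
      · simpa [h] using integrable_id_gauss
      · simpa [h] using (integrable_const (1 : ℝ) (μ := gaussianReal 0 1)))
  have heq : (fun η : Fin d → ℝ =>
      ∏ j, (if j = i then (fun s : ℝ => s) else fun _ => 1) (η j)) = fun η => η i := by
    funext η
    rw [Finset.prod_eq_single i]
    · simp
    · intro j _ hj; simp [hj]
    · simp
  rwa [heq] at h

lemma integral_coord {d : ℕ} (i : Fin d) : ∫ η, η i ∂stdGaussian d = 0 := by
  classical
  have h := integral_pi_prod (fun j => if j = i then (fun s : ℝ => s) else fun _ => 1)
  have heq : (fun η : Fin d → ℝ =>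
      ∏ j, (if j = i then (fun s : ℝ => s) else fun _ => 1) (η j)) = fun η => η i := by
    funext η
    rw [Finset.prod_eq_single i]
    · simp
    · intro j _ hj; simp [hj]
    · simp
  rw [heq] at h
  rw [h, Finset.prod_eq_zero (Finset.mem_univ i)]
  simp [integral_id_gauss]

lemma integrable_linear {d : ℕ} (b : Fin d → ℝ) :
    Integrable (fun η : Fin d → ℝ => ∑ i, b i * η i) (stdGaussian d) :=
  integrable_finset_sum _ fun i _ => (integrable_coord i).const_mul (b i)

lemma integral_linear {d : ℕ} (b : Fin d → ℝ) :
    ∫ η, ∑ i, b i * η i ∂stdGaussian d = 0 := by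
  rw [integral_finset_sum _ fun i _ => (integrable_coord i).const_mul (b i)]
  refine Finset.sum_eq_zero fun i _ => ?_
  rw [integral_const_mul, integral_coord, mul_zero]

lemma exp_linear_eq {d : ℕ} (b : Fin d → ℝ) :
    (fun η : Fin d → ℝ => Real.exp (∑ i, b i * η i))
      = fun η => ∏ i, Real.exp (b i * η i) := by
  funext η
  rw [← Real.exp_sum]

lemma integrable_exp_linear {d : ℕ} (b : Fin d → ℝ) :
    Integrable (fun η : Fin d → ℝ => Real.exp (∑ i, b i * η i)) (stdGaussian d) := by
  rw [exp_linear_eq]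
  exact integrable_pi_prod _ fun i => integrable_exp_gauss (b i)

lemma integral_exp_linear {d : ℕ} (b : Fin d → ℝ) :
    ∫ η, Real.exp (∑ i, b i * η i) ∂stdGaussian d = Real.exp ((∑ i, b i ^ 2) / 2) := by
  rw [exp_linear_eq, integral_pi_prod (fun i => fun s => Real.exp (b i * s))]
  simp_rw [integral_exp_gauss]
  rw [← Real.exp_sum, Finset.sum_div]

instance stdGaussian_prob (d : ℕ) : IsProbabilityMeasure (stdGaussian d) := by
  unfold _root_.stdGaussian; infer_instance

end GWaux

namespace GWaux

set_option maxHeartbeats 1000000 in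
lemma gauss_max_bound {d : ℕ} (hd : 1 ≤ d) (Y : Finset (Fin d → ℝ)) (hY : Y.Nonempty)
    (b : (Fin d → ℝ) → Fin d → ℝ)
    (hb : ∀ x ∈ Y, ∑ i, (b x i) ^ 2 ≤ (d : ℝ)) :
    (∫ η, Y.sup' hY (fun x => ∑ i, b x i * η i) ∂stdGaussian d) ^ 2
      ≤ 2 * d * Real.log Y.card := by
  classical
  by_cases hN1 : Y.card = 1
  · obtain ⟨x, hx⟩ := Finset.card_eq_one.mp hN1
    subst hx
    have h1 : (fun η : Fin d → ℝ =>
        ({x} : Finset (Fin d → ℝ)).sup' hY (fun y => ∑ i, b y i * η i))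
        = fun η : Fin d → ℝ => ∑ i, b x i * η i :=
      funext fun η => Finset.sup'_singleton _
    rw [h1, integral_linear (b x)]
    simp
  -- notation
  set P := stdGaussian d with hP
  have hXint : ∀ x : Fin d → ℝ, Integrable (fun η => ∑ i, b x i * η i) P :=
    fun x => integrable_linear (b x)
  have hFmeas : Measurable fun η : Fin d → ℝ => Y.sup' hY (fun x => ∑ i, b x i * η i) := by
    have h := Finset.measurable_sup' hY (f := fun (x : Fin d → ℝ) (η : Fin d → ℝ) => ∑ i, b x i * η i)
      (fun x _ => Finset.measurable_sum _ fun i _ => (measurable_pi_apply (X := fun _ : Fin d => ℝ) i).const_mul (b x i))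
    have heq : (Y.sup' hY fun x => fun η : Fin d → ℝ => ∑ i, b x i * η i)
        = fun η : Fin d → ℝ => Y.sup' hY fun x => ∑ i, b x i * η i :=
      funext fun η => Finset.sup'_apply hY _ η
    rwa [heq] at h
  obtain ⟨x₀, hx₀⟩ := id hY
  have habs : ∀ η : Fin d → ℝ, |Y.sup' hY (fun x => ∑ i, b x i * η i)|
      ≤ ∑ x ∈ Y, |∑ i, b x i * η i| := by
    intro η
    rw [abs_le]
    constructor
    · have h1 : -(∑ x ∈ Y, |∑ i, b x i * η i|) ≤ -|∑ i, b x₀ i * η i| :=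
        neg_le_neg (Finset.single_le_sum (f := fun x => |∑ i, b x i * η i|)
          (fun y _ => abs_nonneg _) hx₀)
      exact h1.trans ((neg_abs_le _).trans (Finset.le_sup' (fun x => ∑ i, b x i * η i) hx₀))
    · exact Finset.sup'_le _ _ fun x hx =>
        (le_abs_self _).trans (Finset.single_le_sum (f := fun x => |∑ i, b x i * η i|)
          (fun y _ => abs_nonneg _) hx)
  have hFint : Integrable (fun η => Y.sup' hY (fun x => ∑ i, b x i * η i)) P :=
    (integrable_finset_sum _ fun x _ => (hXint x).abs).mono' hFmeas.aestronglyMeasurable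
      (ae_of_all _ fun η => by simpa [Real.norm_eq_abs] using habs η)
  have hFpos : 0 ≤ ∫ η, Y.sup' hY (fun x => ∑ i, b x i * η i) ∂P := by
    have h := integral_mono (hXint x₀) hFint
      (fun η => Finset.le_sup' (fun x => ∑ i, b x i * η i) hx₀)
    rwa [integral_linear (b x₀)] at h
  -- parameters
  have hN2 : 2 ≤ Y.card := by
    have h1 : 0 < Y.card := Finset.card_pos.mpr ⟨x₀, hx₀⟩
    omega
  set L := Real.log Y.card with hLdef
  have hLpos : 0 < L := Real.log_pos (by exact_mod_cast hN2 : (1:ℝ) < (Y.card : ℝ))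
  have hdpos : (0:ℝ) < (d : ℝ) := by exact_mod_cast hd
  set t := Real.sqrt (2 * L / d) with htdef
  have ht : 0 < t := Real.sqrt_pos.mpr (by positivity)
  have ht2 : t ^ 2 = 2 * L / d := Real.sq_sqrt (by positivity)
  -- mgf facts
  have hexpX : ∀ x : Fin d → ℝ,
      Integrable (fun η => Real.exp (t * ∑ i, b x i * η i)) P := by
    intro x
    have h := integrable_exp_linear (d := d) (fun i => t * b x i)
    simpa [mul_assoc, Finset.mul_sum] using h
  have hmgf : ∀ x ∈ Y, ∫ η, Real.exp (t * ∑ i, b x i * η i) ∂P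
      ≤ Real.exp (t ^ 2 * d / 2) := by
    intro x hx
    have h := integral_exp_linear (d := d) (fun i => t * b x i)
    have harg : (fun η : Fin d → ℝ => Real.exp (∑ i, (t * b x i) * η i))
        = fun η => Real.exp (t * ∑ i, b x i * η i) := by
      funext η
      congr 1
      rw [Finset.mul_sum]
      exact Finset.sum_congr rfl fun i _ => mul_assoc _ _ _
    rw [harg] at h
    rw [h, Real.exp_le_exp]
    have hsum : ∑ i, (t * b x i) ^ 2 = t ^ 2 * ∑ i, (b x i) ^ 2 := by
      rw [Finset.mul_sum]
      exact Finset.sum_congr rfl fun i _ => by ring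
    rw [hsum]
    have hbx := hb x hx
    nlinarith [sq_nonneg t]
  have hsup : ∀ η : Fin d → ℝ, Real.exp (t * Y.sup' hY (fun x => ∑ i, b x i * η i))
      = Y.sup' hY fun x => Real.exp (t * ∑ i, b x i * η i) := by
    intro η
    have hmono : Monotone fun s : ℝ => Real.exp (t * s) := fun a c hac =>
      Real.exp_le_exp.mpr (mul_le_mul_of_nonneg_left hac ht.le)
    simpa [Function.comp_def] using
      Finset.comp_sup'_eq_sup'_comp ⟨x₀, hx₀⟩ (fun s : ℝ => Real.exp (t * s))
        (fun a c => hmono.map_sup a c)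
  have hsuple : ∀ η : Fin d → ℝ,
      (Y.sup' hY fun x => Real.exp (t * ∑ i, b x i * η i))
        ≤ ∑ x ∈ Y, Real.exp (t * ∑ i, b x i * η i) :=
    fun η => Finset.sup'_le _ _ fun x hx =>
      Finset.single_le_sum (f := fun x => Real.exp (t * ∑ i, b x i * η i))
        (fun y _ => (Real.exp_pos _).le) hx
  have hexpFint : Integrable
      (fun η => Real.exp (t * Y.sup' hY (fun x => ∑ i, b x i * η i))) P := by
    refine (integrable_finset_sum Y fun x _ => hexpX x).mono'
      (Real.measurable_exp.comp (hFmeas.const_mul t)).aestronglyMeasurable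
      (ae_of_all _ fun η => ?_)
    rw [Real.norm_eq_abs, abs_of_pos (Real.exp_pos _), hsup η]
    exact hsuple η
  have hintle : ∫ η, Real.exp (t * Y.sup' hY (fun x => ∑ i, b x i * η i)) ∂P
      ≤ (Y.card : ℝ) * Real.exp (t ^ 2 * d / 2) := by
    calc ∫ η, Real.exp (t * Y.sup' hY (fun x => ∑ i, b x i * η i)) ∂P
        ≤ ∫ η, ∑ x ∈ Y, Real.exp (t * ∑ i, b x i * η i) ∂P :=
          integral_mono hexpFint (integrable_finset_sum _ fun x _ => hexpX x)
            (fun η => by rw [hsup η]; exact hsuple η)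
      _ = ∑ x ∈ Y, ∫ η, Real.exp (t * ∑ i, b x i * η i) ∂P :=
          integral_finset_sum _ fun x _ => hexpX x
      _ ≤ ∑ _x ∈ Y, Real.exp (t ^ 2 * d / 2) := Finset.sum_le_sum hmgf
      _ = (Y.card : ℝ) * Real.exp (t ^ 2 * d / 2) := by
          rw [Finset.sum_const, nsmul_eq_mul]
  have hjensen : Real.exp (t * ∫ η, Y.sup' hY (fun x => ∑ i, b x i * η i) ∂P)
      ≤ ∫ η, Real.exp (t * Y.sup' hY (fun x => ∑ i, b x i * η i)) ∂P := by
    have h := convexOn_exp.map_integral_le (μ := P) Real.continuous_exp.continuousOn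
      isClosed_univ (ae_of_all _ fun η => Set.mem_univ _) (hFint.const_mul t)
      (by simpa [Function.comp_def] using hexpFint)
    rw [integral_const_mul] at h
    simpa [Function.comp_def] using h
  have hcardpos : (0:ℝ) < (Y.card : ℝ) := by positivity
  have hIt : t * (∫ η, Y.sup' hY (fun x => ∑ i, b x i * η i) ∂P) ≤ L + t ^ 2 * d / 2 := by
    rw [← Real.exp_le_exp, Real.exp_add, Real.exp_log hcardpos]
    exact hjensen.trans hintle
  have h2L : t ^ 2 * d = 2 * L := by
    rw [ht2]; field_simp
  have hI : (∫ η, Y.sup' hY (fun x => ∑ i, b x i * η i) ∂P) ≤ t * d := by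
    nlinarith [hIt, ht, h2L]
  have hsq : (t * d) ^ 2 = 2 * d * L := by
    rw [mul_pow, ht2]; field_simp
  calc (∫ η, Y.sup' hY (fun x => ∑ i, b x i * η i) ∂P) ^ 2
      ≤ (t * d) ^ 2 := pow_le_pow_left₀ hFpos hI 2
    _ = 2 * d * L := hsq

end GWaux

namespace GWaux

set_option maxHeartbeats 1000000 in
lemma exists_design {d : ℕ} (Y : Finset (Fin d → ℝ)) (hY : Y.Nonempty)
    (h01 : ∀ x ∈ Y, ∀ i, x i = 0 ∨ x i = 1)
    (hcov : ∀ i : Fin d, ∃ x ∈ Y, x i = 1) :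
    ∃ w : (Fin d → ℝ) → ℝ, (∀ x ∈ Y, 0 ≤ w x) ∧ (∑ x ∈ Y, w x = 1) ∧
      (∀ i : Fin d, 0 < ∑ x ∈ Y, w x * x i) ∧
      (∀ x ∈ Y, (∑ i, x i / (∑ y ∈ Y, w y * y i)) ≤ (d : ℝ)) := by
  classical
  haveI : Nonempty {x // x ∈ Y} := ⟨⟨hY.choose, hY.choose_spec⟩⟩
  set A : ({x // x ∈ Y} → ℝ) → Fin d → ℝ :=
    fun v i => ∑ x : {x // x ∈ Y}, v x * (x : Fin d → ℝ) i with hA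
  set g : ({x // x ∈ Y} → ℝ) → ℝ := fun v => ∏ i, A v i with hg
  have hgcont : Continuous g := continuous_finset_prod _ fun i _ =>
    continuous_finset_sum _ fun x _ => (continuous_apply x).mul continuous_const
  have hcard : (0:ℝ) < (Y.card : ℝ) := by exact_mod_cast Finset.card_pos.mpr hY
  set u : {x // x ∈ Y} → ℝ := fun _ => (Y.card : ℝ)⁻¹ with hu
  have hu_mem : u ∈ stdSimplex ℝ {x // x ∈ Y} := by
    constructor
    · intro x; rw [hu]; positivity
    · rw [hu, Finset.sum_const, nsmul_eq_mul, Finset.card_univ, Fintype.card_coe]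
      field_simp
  have hxnonneg : ∀ (x : {x // x ∈ Y}) (i : Fin d), (0:ℝ) ≤ (x : Fin d → ℝ) i := by
    intro x i
    rcases h01 x x.2 i with h | h <;> rw [h] <;> norm_num
  have hAu : ∀ i, 0 < A u i := by
    intro i
    obtain ⟨x, hxY, hxi⟩ := hcov i
    have hix : u ⟨x, hxY⟩ * (x : Fin d → ℝ) i ≤ A u i :=
      Finset.single_le_sum (f := fun y : {x // x ∈ Y} => u y * (y : Fin d → ℝ) i)
        (fun y _ => mul_nonneg (by rw [hu]; positivity) (hxnonneg y i)) (Finset.mem_univ ⟨x, hxY⟩)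
    have : u ⟨x, hxY⟩ * (x : Fin d → ℝ) i = (Y.card : ℝ)⁻¹ := by
      show (Y.card : ℝ)⁻¹ * x i = (Y.card : ℝ)⁻¹
      rw [hxi, mul_one]
    rw [this] at hix
    exact lt_of_lt_of_le (by positivity) hix
  obtain ⟨v, hvmem, hvmax⟩ := (isCompact_stdSimplex ℝ _).exists_isMaxOn ⟨u, hu_mem⟩
    hgcont.continuousOn
  have hgu : 0 < g u := Finset.prod_pos fun i _ => hAu i
  have hgv : 0 < g v := lt_of_lt_of_le hgu (hvmax hu_mem)
  have hAv0 : ∀ i, 0 ≤ A v i := fun i =>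
    Finset.sum_nonneg fun x _ => mul_nonneg (hvmem.1 x) (hxnonneg x i)
  have hAv : ∀ i, 0 < A v i := by
    intro i
    rcases (hAv0 i).lt_or_eq with h | h
    · exact h
    · exfalso
      have h0 : g v = 0 := Finset.prod_eq_zero (Finset.mem_univ i) h.symm
      rw [h0] at hgv
      exact lt_irrefl _ hgv
  have hkkt : ∀ yy : {x // x ∈ Y}, (∑ i, (yy : Fin d → ℝ) i / A v i) ≤ (d : ℝ) := by
    intro yy
    set e : {x // x ∈ Y} → ℝ := fun x => if x = yy then 1 else 0 with he
    have he_mem : e ∈ stdSimplex ℝ {x // x ∈ Y} := by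
      constructor
      · intro x; rw [he]; dsimp only; split <;> norm_num
      · rw [he]; simp
    set c : Fin d → ℝ := fun i => (yy : Fin d → ℝ) i - A v i with hc
    set φ : ℝ → ℝ := fun s => ∏ i, (A v i + s * c i) with hφ
    have hAe : ∀ i, A e i = (yy : Fin d → ℝ) i := by
      intro i
      rw [hA, he]
      simp [ite_mul]
    have hφeq : ∀ s : ℝ, φ s = g ((1-s) • v + s • e) := by
      intro s
      refine Finset.prod_congr rfl fun i _ => ?_
      have hlin : A ((1-s) • v + s • e) i = (1-s) * A v i + s * A e i := by
        rw [hA]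
        simp only [Pi.add_apply, Pi.smul_apply, smul_eq_mul]
        simp_rw [add_mul, mul_assoc]
        rw [Finset.sum_add_distrib, ← Finset.mul_sum, ← Finset.mul_sum]
      rw [hlin, hAe, hc]
      ring
    have hmax : ∀ s ∈ Set.Ioo (0:ℝ) 1, φ s ≤ φ 0 := by
      intro s hs
      have h0 : φ 0 = g v := by
        rw [hφ]; simp [hg]
      rw [h0, hφeq s]
      have hmem : (1-s) • v + s • e ∈ stdSimplex ℝ {x // x ∈ Y} :=
        convex_stdSimplex ℝ _ hvmem he_mem (by linarith [hs.2]) hs.1.le (by ring)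
      exact hvmax hmem
    have hD : HasDerivAt φ (∑ i, (∏ j ∈ Finset.univ.erase i, A v j) * c i) 0 := by
      have h := HasDerivAt.finset_prod (u := (Finset.univ : Finset (Fin d)))
        (f := fun i s => A v i + s * c i) (f' := fun i => c i) (x := 0)
        (fun i _ => by simpa using ((hasDerivAt_id (0:ℝ)).mul_const (c i)).const_add (A v i))
      simpa [smul_eq_mul, mul_comm, Finset.prod_fn, hφ] using h
    have hDle : (∑ i, (∏ j ∈ Finset.univ.erase i, A v j) * c i) ≤ 0 := by
      have hslope := hasDerivAt_iff_tendsto_slope.mp hD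
      have hslope' : Filter.Tendsto (slope φ 0) (nhdsWithin 0 (Set.Ioi 0))
          (nhds (∑ i, (∏ j ∈ Finset.univ.erase i, A v j) * c i)) :=
        hslope.mono_left (nhdsWithin_mono _ fun s hs => ne_of_gt hs)
      refine le_of_tendsto hslope' ?_
      filter_upwards [Ioo_mem_nhdsGT_of_mem (Set.mem_Ico.mpr ⟨le_refl (0:ℝ), zero_lt_one⟩)]
        with s hs
      rw [slope_def_field]
      apply div_nonpos_of_nonpos_of_nonneg
      · linarith [hmax s hs]
      · linarith [hs.1]
    have hfactor : ∀ i : Fin d, (∏ j ∈ Finset.univ.erase i, A v j) * c i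
        = g v * ((yy : Fin d → ℝ) i / A v i - 1) := by
      intro i
      have hprod : A v i * ∏ j ∈ Finset.univ.erase i, A v j = g v := by
        rw [hg]; exact Finset.mul_prod_erase _ _ (Finset.mem_univ i)
      have hAvi : A v i ≠ 0 := (hAv i).ne'
      have hpe : (∏ j ∈ Finset.univ.erase i, A v j) = g v / A v i := by
        field_simp [← hprod]
        rw [mul_comm]; exact hprod
      rw [hpe, hc]
      field_simp
    have hsum : (∑ i, (∏ j ∈ Finset.univ.erase i, A v j) * c i)
        = g v * ((∑ i, (yy : Fin d → ℝ) i / A v i) - d) := by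
      rw [Finset.sum_congr rfl fun i _ => hfactor i, ← Finset.mul_sum]
      congr 1
      rw [Finset.sum_sub_distrib]
      simp [Finset.card_univ]
    rw [hsum] at hDle
    nlinarith [hgv, hDle]
  have hconv : ∀ i : Fin d,
      (∑ y ∈ Y, (if hy : y ∈ Y then v ⟨y, hy⟩ else 0) * y i) = A v i := by
    intro i
    calc (∑ y ∈ Y, (if hy : y ∈ Y then v ⟨y, hy⟩ else 0) * y i)
        = ∑ y : {x // x ∈ Y},
            (if hy : (y : Fin d → ℝ) ∈ Y then v ⟨y, hy⟩ else 0) * (y : Fin d → ℝ) i :=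
          (Finset.sum_coe_sort Y _).symm
      _ = ∑ y : {x // x ∈ Y}, v y * (y : Fin d → ℝ) i :=
          Finset.sum_congr rfl fun y _ => by simp [y.2]
      _ = A v i := rfl
  refine ⟨fun x => if hx : x ∈ Y then v ⟨x, hx⟩ else 0, ?_, ?_, ?_, ?_⟩
  · intro x hx
    simp only [dif_pos hx]
    exact hvmem.1 _
  · calc (∑ x ∈ Y, (if hx : x ∈ Y then v ⟨x, hx⟩ else 0))
        = ∑ x : {x // x ∈ Y}, (if hx : (x : Fin d → ℝ) ∈ Y then v ⟨x, hx⟩ else 0) :=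
          (Finset.sum_coe_sort Y _).symm
      _ = ∑ x : {x // x ∈ Y}, v x := Finset.sum_congr rfl fun x _ => by simp [x.2]
      _ = 1 := hvmem.2
  · intro i
    rw [hconv i]
    exact hAv i
  · intro x hx
    calc (∑ i, x i / (∑ y ∈ Y, (if hy : y ∈ Y then v ⟨y, hy⟩ else 0) * y i))
        = ∑ i, x i / A v i := Finset.sum_congr rfl fun i _ => by rw [hconv i]
      _ ≤ (d : ℝ) := hkkt ⟨x, hx⟩

end GWaux

namespace GWaux

lemma card_le {d : ℕ} (Y : Finset (Fin d → ℝ))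
    (h01 : ∀ x ∈ Y, ∀ i, x i = 0 ∨ x i = 1) : Y.card ≤ 2 ^ d := by
  classical
  have h := Finset.card_le_card_of_injOn
    (f := fun (x : Fin d → ℝ) => fun i => if x i = 1 then true else false)
    (t := (Finset.univ : Finset (Fin d → Bool)))
    (fun x _ => Finset.mem_univ _)
    (by
      intro x hx y hy hfeq
      funext i
      have hthis := congrFun hfeq i
      rcases h01 x hx i with h1 | h1 <;> rcases h01 y hy i with h2 | h2 <;>
        simp only [h1, h2] <;> simp [h1, h2] at hthis ⊢)
  calc Y.card ≤ (Finset.univ : Finset (Fin d → Bool)).card := h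
    _ = 2 ^ d := by simp [Finset.card_univ]

end GWaux

/-- **Proposition 3 (semi-bandit case).** There is a universal constant `c > 0` such that
for every `d ≥ 1` and every nonempty finite `Y ⊆ {0,1}^d` covering all coordinates, there
is a probability vector `w` on `Y` whose diagonal design `A_semi(w)` has positive diagonal
entries and whose squared Gaussian width
`(E_η[ max_{x∈Y} xᵀ A_semi(w)^{-1/2} η ])²` is at most `c · min(d log|Y|, d²)`. -/
theorem gaussian_width_semi_le_min_dlog_dsq :
    ∃ c : ℝ, 0 < c ∧
      ∀ (d : ℕ), 1 ≤ d →
      ∀ (Y : Finset (Fin d → ℝ)) (hY : Y.Nonempty),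
        (∀ x ∈ Y, ∀ i, x i = 0 ∨ x i = 1) →
        (∀ i : Fin d, ∃ x ∈ Y, x i = 1) →
        ∃ w : (Fin d → ℝ) → ℝ,
          (∀ x ∈ Y, 0 ≤ w x) ∧ (∑ x ∈ Y, w x = 1) ∧
          (∀ i : Fin d, 0 < ∑ x ∈ Y, w x * x i) ∧
          (∫ η, Y.sup' hY
              (fun x => ∑ i, x i * η i / Real.sqrt (∑ y ∈ Y, w y * y i))
              ∂ stdGaussian d) ^ 2
            ≤ c * min ((d : ℝ) * Real.log (Y.card)) ((d : ℝ) ^ 2) := by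
  refine ⟨2, by norm_num, ?_⟩
  intro d hd Y hY h01 hcov
  obtain ⟨w, hw0, hw1, hwA, hwbound⟩ := GWaux.exists_design Y hY h01 hcov
  refine ⟨w, hw0, hw1, hwA, ?_⟩
  have hb : ∀ x ∈ Y, ∑ i, (x i / Real.sqrt (∑ y ∈ Y, w y * y i)) ^ 2 ≤ (d : ℝ) := by
    intro x hx
    have hsq : ∀ i : Fin d,
        (x i / Real.sqrt (∑ y ∈ Y, w y * y i)) ^ 2 = x i / (∑ y ∈ Y, w y * y i) := by
      intro i
      have hpos := hwA i
      rcases h01 x hx i with h | h <;>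
        · rw [div_pow, Real.sq_sqrt hpos.le, h]; norm_num
    rw [Finset.sum_congr rfl fun i _ => hsq i]
    exact hwbound x hx
  have hkey := GWaux.gauss_max_bound hd Y hY
    (fun x i => x i / Real.sqrt (∑ y ∈ Y, w y * y i)) hb
  have hfun : (fun η : Fin d → ℝ =>
      Y.sup' hY fun x => ∑ i, x i * η i / Real.sqrt (∑ y ∈ Y, w y * y i))
      = fun η : Fin d → ℝ =>
        Y.sup' hY fun x => ∑ i, (x i / Real.sqrt (∑ y ∈ Y, w y * y i)) * η i := by
    funext η
    exact Finset.sup'_congr hY rfl fun x _ =>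
      Finset.sum_congr rfl fun i _ => (div_mul_eq_mul_div _ _ _).symm
  rw [hfun]
  have hN1 : 0 < Y.card := Finset.card_pos.mpr hY
  have hlog0 : 0 ≤ Real.log Y.card := Real.log_nonneg (by exact_mod_cast hN1)
  have hcard : Y.card ≤ 2 ^ d := GWaux.card_le Y h01
  have hd0 : (0:ℝ) ≤ (d : ℝ) := Nat.cast_nonneg d
  have hlogle : Real.log Y.card ≤ (d : ℝ) := by
    calc Real.log Y.card ≤ Real.log ((2 : ℝ) ^ d) := by
          apply Real.log_le_log (by exact_mod_cast hN1)
          exact_mod_cast hcard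
      _ = (d : ℝ) * Real.log 2 := by rw [Real.log_pow]
      _ ≤ (d : ℝ) * 1 := by nlinarith [Real.log_two_lt_d9]
      _ = (d : ℝ) := mul_one _
  have hmin : min ((d : ℝ) * Real.log Y.card) ((d : ℝ) ^ 2)
      = (d : ℝ) * Real.log Y.card := by
    apply min_eq_left
    calc (d : ℝ) * Real.log Y.card ≤ (d : ℝ) * (d : ℝ) := by nlinarith
      _ = (d : ℝ) ^ 2 := (sq (d : ℝ)).symm
  rw [hmin]
  refine le_trans hkey (le_of_eq (by ring))
end

section
/- There is a universal constant c > 0 such that for every d ≥ 3 and every nonempty finite set Y ⊆ {0,1}^d \ {0} with ∪_{x∈Y} supp(x) = {1,…,d}, letting k = max_{x∈Y} ‖x‖₁, there exists a probability vector λ on Y such that every diagonal entry of A_semi(λ) is positive and (E_η[ max_{x∈Y} x^⊤ A_semi(λ)^{-1/2} η ])² ≤ c · d · k · log d. (This is the semi-bandit case of the paper's Proposition 4, bounding the worst-case Gaussian width of a combinatorial action set by c·d·k·log d.) -/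
open MeasureTheory ProbabilityTheory Real
open scoped ENNReal NNReal

instance (d : ℕ) : IsProbabilityMeasure (stdGaussian d) := by
  unfold _root_.stdGaussian; infer_instance

lemma gauss_pdf_shift (c x : ℝ) :
    Real.exp (c * x) * gaussianPDFReal 0 1 x = Real.exp (c ^ 2 / 2) * gaussianPDFReal c 1 x := by
  simp only [gaussianPDFReal_def, NNReal.coe_one]
  have h : Real.exp (c * x) * Real.exp (-(x - 0) ^ 2 / (2 * 1)) =
      Real.exp (c ^ 2 / 2) * Real.exp (-(x - c) ^ 2 / (2 * 1)) := by
    rw [← Real.exp_add, ← Real.exp_add]; congr 1; ring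
  rw [mul_left_comm, h, mul_left_comm]

lemma integrable_exp_gaussian (c : ℝ) :
    Integrable (fun x => Real.exp (c * x)) (gaussianReal 0 1) := by
  rw [gaussianReal_of_var_ne_zero 0 one_ne_zero]
  have hm : Measurable (fun x => (gaussianPDFReal 0 1 x).toNNReal) :=
    (measurable_gaussianPDFReal 0 1).real_toNNReal
  have : gaussianPDF 0 1 = fun x => ((fun x => (gaussianPDFReal 0 1 x).toNNReal) x : ℝ≥0∞) := by
    funext x; rfl
  rw [this, integrable_withDensity_iff_integrable_smul hm]
  have heq : (fun x => (gaussianPDFReal 0 1 x).toNNReal • Real.exp (c * x))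
      = fun x => Real.exp (c ^ 2 / 2) * gaussianPDFReal c 1 x := by
    funext x
    simp only [NNReal.smul_def, smul_eq_mul, Real.coe_toNNReal _ (gaussianPDFReal_nonneg 0 1 x)]
    rw [mul_comm (gaussianPDFReal 0 1 x), gauss_pdf_shift]
  rw [heq]
  exact (integrable_gaussianPDFReal c 1).const_mul _

lemma integral_exp_gaussian (c : ℝ) :
    ∫ x, Real.exp (c * x) ∂(gaussianReal 0 1) = Real.exp (c ^ 2 / 2) := by
  rw [gaussianReal_of_var_ne_zero 0 one_ne_zero]
  have hm : Measurable (fun x => (gaussianPDFReal 0 1 x).toNNReal) :=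
    (measurable_gaussianPDFReal 0 1).real_toNNReal
  have h : gaussianPDF 0 1 = fun x => ((fun x => (gaussianPDFReal 0 1 x).toNNReal) x : ℝ≥0∞) := by
    funext x; rfl
  rw [h, integral_withDensity_eq_integral_smul hm]
  have heq : (fun x => (gaussianPDFReal 0 1 x).toNNReal • Real.exp (c * x))
      = fun x => Real.exp (c ^ 2 / 2) * gaussianPDFReal c 1 x := by
    funext x
    simp only [NNReal.smul_def, smul_eq_mul, Real.coe_toNNReal _ (gaussianPDFReal_nonneg 0 1 x)]
    rw [mul_comm (gaussianPDFReal 0 1 x), gauss_pdf_shift]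
  rw [heq, integral_const_mul, integral_gaussianPDFReal_eq_one c one_ne_zero, mul_one]

lemma stdGaussian_integrable_prod {d : ℕ} (f : Fin d → ℝ → ℝ)
    (hf : ∀ i, Integrable (f i) (gaussianReal 0 1)) :
    Integrable (fun η : Fin d → ℝ => ∏ i, f i (η i)) (stdGaussian d) := by
  letI : MeasureSpace ℝ := ⟨gaussianReal 0 1⟩
  haveI : SigmaFinite (volume : Measure ℝ) :=
    (inferInstance : SigmaFinite (gaussianReal 0 1))
  exact Integrable.fintype_prod (f := f) hf

lemma stdGaussian_integral_prod {d : ℕ} (f : Fin d → ℝ → ℝ) :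
    ∫ η, (∏ i, f i (η i)) ∂(stdGaussian d) = ∏ i, ∫ x, f i x ∂(gaussianReal 0 1) := by
  letI : MeasureSpace ℝ := ⟨gaussianReal 0 1⟩
  haveI : SigmaFinite (volume : Measure ℝ) :=
    (inferInstance : SigmaFinite (gaussianReal 0 1))
  exact integral_fintype_prod_eq_prod (μ := fun _ => gaussianReal 0 1) (fun i => f i)

lemma measurable_linsum {d : ℕ} (c : Fin d → ℝ) :
    Measurable (fun η : Fin d → ℝ => ∑ i, c i * η i) := by
  exact Finset.measurable_sum _ (fun i _ => (by fun_prop))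

lemma stdGaussian_integrable_exp_sum {d : ℕ} (c : Fin d → ℝ) :
    Integrable (fun η : Fin d → ℝ => Real.exp (∑ i, c i * η i)) (stdGaussian d) := by
  have : (fun η : Fin d → ℝ => Real.exp (∑ i, c i * η i))
      = fun η => ∏ i, Real.exp (c i * η i) := by
    funext η; rw [Real.exp_sum]
  rw [this]
  exact stdGaussian_integrable_prod _ (fun i => integrable_exp_gaussian (c i))

lemma stdGaussian_integral_exp_sum {d : ℕ} (c : Fin d → ℝ) :
    ∫ η, Real.exp (∑ i, c i * η i) ∂(stdGaussian d) = Real.exp (∑ i, c i ^ 2 / 2) := by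
  have h1 : (fun η : Fin d → ℝ => Real.exp (∑ i, c i * η i))
      = fun η => ∏ i, Real.exp (c i * η i) := by
    funext η; rw [Real.exp_sum]
  rw [h1]
  refine (stdGaussian_integral_prod (fun i x => Real.exp (c i * x))).trans ?_
  rw [Real.exp_sum]
  exact Finset.prod_congr rfl fun i _ => integral_exp_gaussian (c i)

lemma stdGaussian_integrable_linsum {d : ℕ} (c : Fin d → ℝ) :
    Integrable (fun η : Fin d → ℝ => ∑ i, c i * η i) (stdGaussian d) := by
  refine Integrable.mono' ((stdGaussian_integrable_exp_sum c).add
    (stdGaussian_integrable_exp_sum (fun i => -c i)))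
    (measurable_linsum c).aestronglyMeasurable ?_
  filter_upwards with η
  simp only [Pi.add_apply, Real.norm_eq_abs]
  have h1 : ∑ i, -c i * η i = -(∑ i, c i * η i) := by
    rw [← Finset.sum_neg_distrib]; exact Finset.sum_congr rfl fun i _ => by ring
  rw [h1]
  set y := ∑ i, c i * η i
  rcases abs_cases y with ⟨h2, _⟩ | ⟨h2, _⟩ <;> rw [h2]
  · nlinarith [Real.add_one_le_exp y, Real.exp_pos (-y)]
  · nlinarith [Real.add_one_le_exp (-y), Real.exp_pos y]
section Width

variable {d : ℕ} (Y : Finset (Fin d → ℝ)) (hY : Y.Nonempty) (c : (Fin d → ℝ) → Fin d → ℝ)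

lemma exp_mul_linsum (t : ℝ) (x : Fin d → ℝ) (η : Fin d → ℝ) :
    Real.exp (t * ∑ i, c x i * η i) = Real.exp (∑ i, (t * c x i) * η i) := by
  congr 1
  rw [Finset.mul_sum]
  exact Finset.sum_congr rfl fun i _ => by ring

lemma integral_exp_mul_linsum (t : ℝ) (x : Fin d → ℝ) :
    ∫ η, Real.exp (t * ∑ i, c x i * η i) ∂(stdGaussian d)
      = Real.exp (t ^ 2 / 2 * ∑ i, c x i ^ 2) := by
  have h : (fun η : Fin d → ℝ => Real.exp (t * ∑ i, c x i * η i))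
      = fun η => Real.exp (∑ i, (t * c x i) * η i) := by
    funext η; exact exp_mul_linsum c t x η
  rw [h, stdGaussian_integral_exp_sum]
  congr 1
  rw [Finset.mul_sum]
  exact Finset.sum_congr rfl fun i _ => by ring

lemma integrable_exp_mul_linsum (t : ℝ) (x : Fin d → ℝ) :
    Integrable (fun η : Fin d → ℝ => Real.exp (t * ∑ i, c x i * η i)) (stdGaussian d) := by
  have h : (fun η : Fin d → ℝ => Real.exp (t * ∑ i, c x i * η i))
      = fun η => Real.exp (∑ i, (t * c x i) * η i) := by
    funext η; exact exp_mul_linsum c t x η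
  rw [h]
  exact stdGaussian_integrable_exp_sum _

lemma measurable_supf :
    Measurable (fun η : Fin d → ℝ => Y.sup' hY (fun x => ∑ i, c x i * η i)) := by
  have : (fun η : Fin d → ℝ => Y.sup' hY (fun x => ∑ i, c x i * η i))
      = Y.sup' hY (fun x => fun η : Fin d → ℝ => ∑ i, c x i * η i) := by
    funext η
    exact (Finset.sup'_apply hY (fun x => fun η : Fin d → ℝ => ∑ i, c x i * η i) η).symm
  rw [this]
  exact Finset.measurable_sup' hY fun x _ => measurable_linsum (c x)

lemma integrable_supf :
    Integrable (fun η : Fin d → ℝ => Y.sup' hY (fun x => ∑ i, c x i * η i))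
      (stdGaussian d) := by
  refine Integrable.mono'
    (integrable_finset_sum Y (fun x _ => (stdGaussian_integrable_linsum (c x)).abs))
    (measurable_supf Y hY c).aestronglyMeasurable ?_
  filter_upwards with η
  rw [Real.norm_eq_abs, abs_le]
  obtain ⟨x₀, hx₀, hs⟩ := Finset.exists_mem_eq_sup' hY (fun x => ∑ i, c x i * η i)
  constructor
  · rw [hs]
    calc -(∑ x ∈ Y, |∑ i, c x i * η i|) ≤ -|∑ i, c x₀ i * η i| := by
          rw [neg_le_neg_iff]
          exact Finset.single_le_sum (f := fun x => |∑ i, c x i * η i|)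
            (fun x _ => abs_nonneg _) hx₀
      _ ≤ ∑ i, c x₀ i * η i := neg_abs_le _
  · rw [hs]
    calc ∑ i, c x₀ i * η i ≤ |∑ i, c x₀ i * η i| := le_abs_self _
      _ ≤ ∑ x ∈ Y, |∑ i, c x i * η i| :=
          Finset.single_le_sum (f := fun x => |∑ i, c x i * η i|)
            (fun x _ => abs_nonneg _) hx₀

lemma exp_supf_le_sum (t : ℝ) (η : Fin d → ℝ) :
    Real.exp (t * Y.sup' hY (fun x => ∑ i, c x i * η i))
      ≤ ∑ x ∈ Y, Real.exp (t * ∑ i, c x i * η i) := by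
  obtain ⟨x₀, hx₀, hs⟩ := Finset.exists_mem_eq_sup' hY (fun x => ∑ i, c x i * η i)
  rw [hs]
  exact Finset.single_le_sum (f := fun x => Real.exp (t * ∑ i, c x i * η i))
    (fun x _ => (Real.exp_pos _).le) hx₀

lemma integrable_exp_supf (t : ℝ) :
    Integrable (fun η : Fin d → ℝ =>
      Real.exp (t * Y.sup' hY (fun x => ∑ i, c x i * η i))) (stdGaussian d) := by
  refine Integrable.mono'
    (integrable_finset_sum Y (fun x _ => integrable_exp_mul_linsum c t x))
    (Measurable.aestronglyMeasurable ?_) ?_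
  · exact (Real.measurable_exp.comp ((measurable_supf Y hY c).const_mul t))
  · filter_upwards with η
    rw [Real.norm_eq_abs, abs_of_pos (Real.exp_pos _)]
    exact exp_supf_le_sum Y hY c t η

lemma jensen_exp_supf (t : ℝ) :
    Real.exp (t * ∫ η, Y.sup' hY (fun x => ∑ i, c x i * η i) ∂(stdGaussian d))
      ≤ ∫ η, Real.exp (t * Y.sup' hY (fun x => ∑ i, c x i * η i)) ∂(stdGaussian d) := by
  rw [← integral_const_mul]
  exact ConvexOn.map_integral_le convexOn_exp Real.continuous_exp.continuousOn
    isClosed_univ (Filter.Eventually.of_forall fun _ => Set.mem_univ _)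
    (((integrable_supf Y hY c)).const_mul t) (integrable_exp_supf Y hY c t)

lemma width_sq_le (S : ℝ) (hS : 0 < S)
    (hvar : ∀ x ∈ Y, ∑ i, c x i ^ 2 ≤ S) :
    (∫ η, Y.sup' hY (fun x => ∑ i, c x i * η i) ∂(stdGaussian d)) ^ 2
      ≤ 2 * Real.log (2 * Y.card) * S := by
  set M := ∫ η, Y.sup' hY (fun x => ∑ i, c x i * η i) ∂(stdGaussian d) with hM
  have hN1 : (1 : ℝ) ≤ (Y.card : ℝ) := by
    exact_mod_cast Nat.one_le_iff_ne_zero.mpr (Finset.card_ne_zero_of_mem hY.choose_spec)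
  have hNpos : (0 : ℝ) < (Y.card : ℝ) := lt_of_lt_of_le one_pos hN1
  -- upper bound on exp(t M) for every t
  have key : ∀ t : ℝ, Real.exp (t * M) ≤ (Y.card : ℝ) * Real.exp (t ^ 2 / 2 * S) := by
    intro t
    refine (jensen_exp_supf Y hY c t).trans ?_
    have h1 : ∫ η, Real.exp (t * Y.sup' hY (fun x => ∑ i, c x i * η i)) ∂(stdGaussian d)
        ≤ ∫ η, (∑ x ∈ Y, Real.exp (t * ∑ i, c x i * η i)) ∂(stdGaussian d) := by
      refine integral_mono (integrable_exp_supf Y hY c t)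
        (integrable_finset_sum Y (fun x _ => integrable_exp_mul_linsum c t x)) ?_
      intro η
      exact exp_supf_le_sum Y hY c t η
    refine h1.trans ?_
    rw [integral_finset_sum Y (fun x _ => integrable_exp_mul_linsum c t x)]
    have h2 : ∀ x ∈ Y, ∫ η, Real.exp (t * ∑ i, c x i * η i) ∂(stdGaussian d)
        ≤ Real.exp (t ^ 2 / 2 * S) := by
      intro x hx
      rw [integral_exp_mul_linsum]
      exact Real.exp_le_exp.mpr (mul_le_mul_of_nonneg_left (hvar x hx) (by positivity))
    calc ∑ x ∈ Y, ∫ η, Real.exp (t * ∑ i, c x i * η i) ∂(stdGaussian d)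
        ≤ ∑ _x ∈ Y, Real.exp (t ^ 2 / 2 * S) := Finset.sum_le_sum h2
      _ = (Y.card : ℝ) * Real.exp (t ^ 2 / 2 * S) := by
          rw [Finset.sum_const, nsmul_eq_mul]
  -- M is nonnegative
  have hM0 : 0 ≤ M := by
    by_contra hneg
    push_neg at hneg
    -- with t = 2*M/S < 0 : exp(tM) ≤ exp(t²S/2 + log N) gives contradiction? use ε
    -- Instead: for x₀ ∈ Y, for t < 0, exp(t M) ≤ exp(t²/2 S):
    have hx₀ := hY.choose_spec
    set x₀ := hY.choose
    have hb : ∀ t : ℝ, t ≤ 0 → Real.exp (t * M) ≤ Real.exp (t ^ 2 / 2 * S) := by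
      intro t ht
      refine (jensen_exp_supf Y hY c t).trans ?_
      have h1 : ∫ η, Real.exp (t * Y.sup' hY (fun x => ∑ i, c x i * η i)) ∂(stdGaussian d)
          ≤ ∫ η, Real.exp (t * ∑ i, c x₀ i * η i) ∂(stdGaussian d) := by
        refine integral_mono (integrable_exp_supf Y hY c t)
          (integrable_exp_mul_linsum c t x₀) ?_
        intro η
        refine Real.exp_le_exp.mpr ?_
        exact mul_le_mul_of_nonpos_left (Finset.le_sup' (fun x => ∑ i, c x i * η i) hx₀) ht
      refine h1.trans ?_
      rw [integral_exp_mul_linsum]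
      exact Real.exp_le_exp.mpr (mul_le_mul_of_nonneg_left (hvar x₀ hx₀) (by positivity))
    -- choose t = M / S < 0
    have h := hb (M / S) (by exact (div_nonpos_iff.mpr (Or.inr ⟨hneg.le, hS.le⟩)))
    rw [Real.exp_le_exp] at h
    have hMS : (M / S) * M = M ^ 2 / S := by field_simp
    rw [hMS] at h
    have h2 : (M / S) ^ 2 / 2 * S = M ^ 2 / (2 * S) := by field_simp
    rw [h2] at h
    have : M ^ 2 / (2 * S) < M ^ 2 / S := by
      apply div_lt_div_of_pos_left (by nlinarith) hS
      linarith
    linarith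
  -- final bound
  have hL : Real.log 2 ≤ Real.log (2 * Y.card) := by
    apply Real.log_le_log (by norm_num)
    nlinarith
  have hLpos : 0 < Real.log (2 * Y.card) :=
    lt_of_lt_of_le (Real.log_pos (by norm_num)) hL
  rcases eq_or_lt_of_le hM0 with hM0' | hMpos
  · rw [← hM0']
    have h0 : (0:ℝ) ≤ 2 * Real.log (2 * Y.card) * S := by nlinarith
    simpa using h0
  · -- use t = M / S
    have h := key (M / S)
    rw [← Real.exp_log (mul_pos hNpos (Real.exp_pos _)),
      Real.exp_le_exp] at h
    rw [Real.log_mul (ne_of_gt hNpos) (ne_of_gt (Real.exp_pos _)), Real.log_exp] at h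
    have hMS : (M / S) * M = M ^ 2 / S := by field_simp
    have h2 : (M / S) ^ 2 / 2 * S = M ^ 2 / (2 * S) := by field_simp
    rw [hMS, h2] at h
    have hlogN : Real.log (Y.card : ℝ) ≤ Real.log (2 * Y.card) := by
      apply Real.log_le_log hNpos
      nlinarith
    have : M ^ 2 / S - M ^ 2 / (2 * S) = M ^ 2 / (2 * S) := by field_simp; ring
    have hfin : M ^ 2 / (2 * S) ≤ Real.log (2 * Y.card) := by linarith
    calc M ^ 2 = (M ^ 2 / (2 * S)) * (2 * S) := by field_simp
      _ ≤ Real.log (2 * Y.card) * (2 * S) := by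
          exact mul_le_mul_of_nonneg_right hfin (by positivity)
      _ = 2 * Real.log (2 * Y.card) * S := by ring

end Width
section Counting

lemma sum_choose_le (d K : ℕ) :
    ∑ j ∈ Finset.range (K + 1), Nat.choose d j ≤ (d + 1) ^ K := by
  induction K with
  | zero => simp
  | succ K ih =>
    rw [Finset.sum_range_succ, pow_succ]
    have h1 : Nat.choose d (K + 1) ≤ d * (d + 1) ^ K := by
      calc Nat.choose d (K + 1) ≤ d ^ (K + 1) := Nat.choose_le_pow d (K + 1)
        _ = d * d ^ K := by ring
        _ ≤ d * (d + 1) ^ K := by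
            exact Nat.mul_le_mul_left d (Nat.pow_le_pow_left (Nat.le_succ d) K)
    calc ∑ j ∈ Finset.range (K + 1), Nat.choose d j + Nat.choose d (K + 1)
        ≤ (d + 1) ^ K + d * (d + 1) ^ K := Nat.add_le_add ih h1
      _ = (d + 1) ^ K * (d + 1) := by ring

lemma card_Y_le_pow {d K : ℕ} (Y : Finset (Fin d → ℝ))
    (h01 : ∀ x ∈ Y, ∀ i, x i = 0 ∨ x i = 1)
    (hK : ∀ x ∈ Y, (Finset.univ.filter (fun i => x i = 1)).card ≤ K) :
    Y.card ≤ (d + 1) ^ K := by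
  classical
  set g : (Fin d → ℝ) → Finset (Fin d) := fun x => Finset.univ.filter (fun i => x i = 1)
    with hg
  have hinj : Set.InjOn g Y := by
    intro x hx y hy hxy
    funext i
    have hmem : (i ∈ g x) = (i ∈ g y) := by rw [hxy]
    simp only [hg, Finset.mem_filter, Finset.mem_univ, true_and, eq_iff_iff] at hmem
    rcases h01 x hx i with h0 | h1
    · rcases h01 y hy i with h0' | h1'
      · rw [h0, h0']
      · exfalso
        rw [h0] at hmem
        exact (by norm_num : (0:ℝ) ≠ 1) (hmem.mpr h1')
    · rw [h1, (hmem.mp h1)]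
  set T : Finset (Finset (Fin d)) :=
    (Finset.range (K + 1)).biUnion (fun j => Finset.powersetCard j Finset.univ) with hT
  have hmaps : ∀ x ∈ Y, g x ∈ T := by
    intro x hx
    rw [hT, Finset.mem_biUnion]
    refine ⟨(g x).card, Finset.mem_range.mpr (Nat.lt_succ_of_le (hK x hx)), ?_⟩
    rw [Finset.mem_powersetCard]
    exact ⟨Finset.subset_univ _, rfl⟩
  have h1 : Y.card ≤ T.card := Finset.card_le_card_of_injOn g hmaps hinj
  refine h1.trans ?_
  calc T.card ≤ ∑ j ∈ Finset.range (K + 1), (Finset.powersetCard j (Finset.univ : Finset (Fin d))).card :=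
        Finset.card_biUnion_le
    _ = ∑ j ∈ Finset.range (K + 1), Nat.choose d j := by
        refine Finset.sum_congr rfl fun j _ => ?_
        rw [Finset.card_powersetCard, Finset.card_univ, Fintype.card_fin]
    _ ≤ (d + 1) ^ K := sum_choose_le d K

end Counting
section Design

variable {d : ℕ}

lemma exists_good_design (hd : 0 < d) (Y : Finset (Fin d → ℝ)) (hY : Y.Nonempty)
    (h01 : ∀ x ∈ Y, ∀ i, x i = 0 ∨ x i = 1)
    (hcov : ∀ i : Fin d, ∃ x ∈ Y, x i = 1) :
    ∃ w : (Fin d → ℝ) → ℝ,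
      (∀ x ∈ Y, 0 ≤ w x) ∧ (∑ x ∈ Y, w x = 1) ∧
      (∀ i : Fin d, 0 < ∑ x ∈ Y, w x * x i) ∧
      (∀ x ∈ Y, ∑ i, x i / (∑ y ∈ Y, w y * y i) ≤ 2 * d) := by
  classical
  set ι := {x : Fin d → ℝ // x ∈ Y} with hι
  set δ : ℝ := (d : ℝ)⁻¹ with hδ
  have hδpos : 0 < δ := by rw [hδ]; positivity
  have hy0 : ∀ (y : ι) (i : Fin d), 0 ≤ (y : Fin d → ℝ) i := by
    intro y i; rcases h01 y y.2 i with h | h <;> rw [h] <;> norm_num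
  set F : (ι → ℝ) → ℝ :=
    fun lam => ∑ i, Real.log (δ + ∑ y : ι, lam y * (y : Fin d → ℝ) i) with hF
  have harg_pos : ∀ lam ∈ stdSimplex ℝ ι, ∀ i : Fin d,
      0 < δ + ∑ y : ι, lam y * (y : Fin d → ℝ) i := by
    intro lam hlam i
    have : 0 ≤ ∑ y : ι, lam y * (y : Fin d → ℝ) i :=
      Finset.sum_nonneg fun y _ => mul_nonneg (hlam.1 y) (hy0 y i)
    linarith
  have hFcont : ContinuousOn F (stdSimplex ℝ ι) := by
    apply continuousOn_finset_sum
    intro i _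
    apply ContinuousOn.log
    · apply Continuous.continuousOn
      exact continuous_const.add
        (continuous_finset_sum _ fun y _ => (continuous_apply y).mul continuous_const)
    · intro lam hlam
      exact ne_of_gt (harg_pos lam hlam i)
  have hy₀ : hY.choose ∈ Y := hY.choose_spec
  have he0mem : (fun y : ι => if y = ⟨hY.choose, hy₀⟩ then (1:ℝ) else 0)
      ∈ stdSimplex ℝ ι := by
    constructor
    · intro y; dsimp only; split <;> norm_num
    · rw [Finset.sum_ite_eq' Finset.univ (⟨hY.choose, hy₀⟩ : ι) (fun _ => (1:ℝ))]
      simp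
  obtain ⟨lam, hlam_mem, hlam_max⟩ :=
    IsCompact.exists_isMaxOn (isCompact_stdSimplex ℝ ι) ⟨_, he0mem⟩ hFcont
  set m : Fin d → ℝ := fun i => ∑ y : ι, lam y * (y : Fin d → ℝ) i with hm
  have hm0 : ∀ i, 0 ≤ m i :=
    fun i => Finset.sum_nonneg fun y _ => mul_nonneg (hlam_mem.1 y) (hy0 y i)
  have hmδ : ∀ i, 0 < δ + m i := fun i => by linarith [hm0 i]
  -- first order condition at the maximizer
  have hFOC : ∀ x₀ ∈ Y, ∑ i, x₀ i / (δ + m i) ≤ d := by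
    intro x₀ hx₀
    have hx01 : ∀ i, 0 ≤ x₀ i := by
      intro i; rcases h01 x₀ hx₀ i with h | h <;> rw [h] <;> norm_num
    -- the path ψ
    set ψ : ℝ → ℝ := fun t => ∑ i, Real.log (δ + m i + t * (x₀ i - m i)) with hψ
    have hsum_ite : ∀ i : Fin d,
        ∑ y : ι, (if y = (⟨x₀, hx₀⟩ : ι) then (1:ℝ) else 0) * (y : Fin d → ℝ) i
          = x₀ i := by
      intro i
      rw [Finset.sum_congr rfl (fun y _ => by
        split <;> simp_all : ∀ y ∈ Finset.univ,
          (if y = (⟨x₀, hx₀⟩ : ι) then (1:ℝ) else 0) * (y : Fin d → ℝ) i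
            = if y = (⟨x₀, hx₀⟩ : ι) then (⟨x₀, hx₀⟩ : ι).1 i else 0)]
      rw [Finset.sum_ite_eq' Finset.univ (⟨x₀, hx₀⟩ : ι)
        (fun _ => (⟨x₀, hx₀⟩ : ι).1 i)]
      simp
    have hψ_le : ∀ t ∈ Set.Icc (0:ℝ) 1, ψ t ≤ ψ 0 := by
      intro t ht
      have hmem : (fun y : ι => (1 - t) * lam y
          + t * (if y = (⟨x₀, hx₀⟩ : ι) then (1:ℝ) else 0)) ∈ stdSimplex ℝ ι := by
        constructor
        · intro y
          dsimp only
          have h1 : 0 ≤ (1 - t) * lam y :=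
            mul_nonneg (by linarith [ht.2]) (hlam_mem.1 y)
          have h2 : 0 ≤ t * (if y = (⟨x₀, hx₀⟩ : ι) then (1:ℝ) else 0) :=
            mul_nonneg ht.1 (by split <;> norm_num)
          linarith
        · rw [Finset.sum_add_distrib, ← Finset.mul_sum, ← Finset.mul_sum, hlam_mem.2,
            Finset.sum_ite_eq' Finset.univ (⟨x₀, hx₀⟩ : ι) (fun _ => (1:ℝ))]
          simp
      have harg : ∀ i : Fin d,
          δ + ∑ y : ι, ((1 - t) * lam y
              + t * (if y = (⟨x₀, hx₀⟩ : ι) then (1:ℝ) else 0)) * (y : Fin d → ℝ) i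
            = δ + m i + t * (x₀ i - m i) := by
        intro i
        have h1 : ∑ y : ι, ((1 - t) * lam y
              + t * (if y = (⟨x₀, hx₀⟩ : ι) then (1:ℝ) else 0)) * (y : Fin d → ℝ) i
            = (1 - t) * (∑ y : ι, lam y * (y : Fin d → ℝ) i)
              + t * (∑ y : ι, (if y = (⟨x₀, hx₀⟩ : ι) then (1:ℝ) else 0)
                  * (y : Fin d → ℝ) i) := by
          rw [Finset.sum_congr rfl (fun y _ =>
            (by ring : ((1 - t) * lam y
              + t * (if y = (⟨x₀, hx₀⟩ : ι) then (1:ℝ) else 0)) * (y : Fin d → ℝ) i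
              = (1 - t) * (lam y * (y : Fin d → ℝ) i)
                + t * ((if y = (⟨x₀, hx₀⟩ : ι) then (1:ℝ) else 0) * (y : Fin d → ℝ) i)))]
          rw [Finset.sum_add_distrib, ← Finset.mul_sum, ← Finset.mul_sum]
        rw [h1, hsum_ite i, hm]
        ring
      have hFt : F (fun y : ι => (1 - t) * lam y
          + t * (if y = (⟨x₀, hx₀⟩ : ι) then (1:ℝ) else 0)) = ψ t := by
        rw [hF, hψ]
        exact Finset.sum_congr rfl fun i _ => by rw [harg i]
      have hF0 : F lam = ψ 0 := by
        rw [hF, hψ]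
        refine Finset.sum_congr rfl fun i _ => ?_
        rw [hm]
        norm_num
      rw [← hFt, ← hF0]
      exact hlam_max hmem
    -- derivative of ψ at 0
    have hder : HasDerivAt ψ (∑ i, (x₀ i - m i) / (δ + m i)) 0 := by
      rw [hψ]
      have : ∀ i : Fin d, HasDerivAt
          (fun t : ℝ => Real.log (δ + m i + t * (x₀ i - m i)))
          ((x₀ i - m i) / (δ + m i)) 0 := by
        intro i
        have hb : HasDerivAt (fun t : ℝ => δ + m i + t * (x₀ i - m i)) (x₀ i - m i) 0 :=
          (hasDerivAt_mul_const (x₀ i - m i)).const_add (δ + m i)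
        have := hb.log (by
          simpa using (hmδ i).ne' : δ + m i + 0 * (x₀ i - m i) ≠ 0)
        simpa using this
      exact HasDerivAt.fun_sum fun i _ => this i
    -- derivative is nonpositive
    have hD : (∑ i, (x₀ i - m i) / (δ + m i)) ≤ 0 := by
      have hslope : Filter.Tendsto (slope ψ 0) (nhdsWithin 0 (Set.Ioi 0))
          (nhds (∑ i, (x₀ i - m i) / (δ + m i))) := by
        have h := hasDerivWithinAt_iff_tendsto_slope.mp
          (hder.hasDerivWithinAt (s := Set.Ici 0))
        rwa [show Set.Ici (0:ℝ) \ {0} = Set.Ioi 0 by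
          rw [Set.Ici_sdiff_left]] at h
      refine le_of_tendsto hslope ?_
      have h1 : ∀ᶠ t : ℝ in nhdsWithin 0 (Set.Ioi 0), t < 1 :=
        Filter.Eventually.filter_mono nhdsWithin_le_nhds (eventually_lt_nhds zero_lt_one)
      filter_upwards [h1, self_mem_nhdsWithin] with t ht1 ht0
      rw [slope_def_field]
      have hnum : ψ t - ψ 0 ≤ 0 := sub_nonpos.mpr (hψ_le t ⟨le_of_lt ht0, le_of_lt ht1⟩)
      have : ψ t - ψ 0 = ψ t - ψ 0 := rfl
      rw [div_eq_mul_inv]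
      apply mul_nonpos_of_nonpos_of_nonneg hnum
      rw [sub_zero]
      have ht0' : (0:ℝ) < t := ht0
      exact inv_nonneg.mpr ht0'.le
    have hsplit : ∑ i, (x₀ i - m i) / (δ + m i)
        = ∑ i, x₀ i / (δ + m i) - ∑ i, m i / (δ + m i) := by
      rw [← Finset.sum_sub_distrib]
      exact Finset.sum_congr rfl fun i _ => by rw [sub_div]
    have hmle : ∑ i, m i / (δ + m i) ≤ (d : ℝ) := by
      calc ∑ i, m i / (δ + m i) ≤ ∑ _i : Fin d, (1:ℝ) := by
            refine Finset.sum_le_sum fun i _ => ?_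
            rw [div_le_one (hmδ i)]
            linarith [hδpos]
        _ = d := by simp
    rw [hsplit] at hD
    linarith
  -- the covering design
  have hpick : ∀ i : Fin d, ∃ y : ι, (y : Fin d → ℝ) i = 1 := by
    intro i
    obtain ⟨x, hx, hxi⟩ := hcov i
    exact ⟨⟨x, hx⟩, hxi⟩
  choose pick hpick_eq using hpick
  set u : ι → ℝ := fun y => ((Finset.univ.filter (fun j => pick j = y)).card : ℝ) / d
    with hu
  have hu0 : ∀ y, 0 ≤ u y := fun y => by rw [hu]; positivity
  have hcard_sum : ∑ y : ι, ((Finset.univ.filter (fun j => pick j = y)).card : ℝ)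
      = (d : ℝ) := by
    have := Finset.card_eq_sum_card_fiberwise
      (fun (j : Fin d) (_ : j ∈ Finset.univ) => Finset.mem_univ (pick j))
    rw [Finset.card_univ, Fintype.card_fin] at this
    exact_mod_cast this.symm
  have hu_sum : ∑ y : ι, u y = 1 := by
    rw [hu, ← Finset.sum_div, hcard_sum, div_self (by positivity : (d:ℝ) ≠ 0)]
  have hu_cover : ∀ i : Fin d, δ ≤ ∑ y : ι, u y * (y : Fin d → ℝ) i := by
    intro i
    have hfib : ∀ y : ι, ((Finset.univ.filter (fun j => pick j = y)).card : ℝ)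
        * (y : Fin d → ℝ) i
        = ∑ j ∈ Finset.univ.filter (fun j => pick j = y), (pick j : Fin d → ℝ) i := by
      intro y
      rw [Finset.sum_congr rfl (fun j hj => by
        rw [(Finset.mem_filter.mp hj).2])]
      rw [Finset.sum_const, nsmul_eq_mul]
    have hsum : ∑ y : ι, u y * (y : Fin d → ℝ) i
        = (∑ j : Fin d, (pick j : Fin d → ℝ) i) / d := by
      have hterm : ∀ y : ι,
          (((Finset.univ.filter (fun j => pick j = y)).card : ℝ) / d) * (y : Fin d → ℝ) i
            = (∑ j ∈ Finset.univ.filter (fun j => pick j = y), (pick j : Fin d → ℝ) i) / d := by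
        intro y; rw [div_mul_eq_mul_div, hfib y]
      rw [hu]
      rw [Finset.sum_congr rfl (fun y _ => hterm y)]
      rw [← Finset.sum_div]
      congr 1
      exact Finset.sum_fiberwise_of_maps_to
        (fun j _ => Finset.mem_univ (pick j)) (fun j => (pick j : Fin d → ℝ) i)
    rw [hsum, hδ]
    rw [inv_eq_one_div, div_le_div_iff₀ (by positivity) (by positivity)]
    have : (1:ℝ) ≤ ∑ j : Fin d, (pick j : Fin d → ℝ) i := by
      calc (1:ℝ) = (pick i : Fin d → ℝ) i := (hpick_eq i).symm
        _ ≤ ∑ j : Fin d, (pick j : Fin d → ℝ) i :=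
            Finset.single_le_sum (f := fun j => (pick j : Fin d → ℝ) i)
              (fun j _ => hy0 (pick j) i) (Finset.mem_univ i)
    nlinarith
  -- final weights
  set w : (Fin d → ℝ) → ℝ :=
    fun x => if h : x ∈ Y then (lam ⟨x, h⟩ + u ⟨x, h⟩) / 2 else 0 with hw
  have hw_eq : ∀ (x) (h : x ∈ Y), w x = (lam ⟨x, h⟩ + u ⟨x, h⟩) / 2 := by
    intro x h; rw [hw]; exact dif_pos h
  refine ⟨w, ?_, ?_, ?_, ?_⟩
  · intro x hx
    rw [hw_eq x hx]
    have := hlam_mem.1 ⟨x, hx⟩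
    have := hu0 ⟨x, hx⟩
    linarith
  · have hconv : ∑ x ∈ Y, w x = ∑ y : ι, (lam y + u y) / 2 := by
      rw [Finset.univ_eq_attach, ← Finset.sum_attach Y w]
      exact Finset.sum_congr rfl fun y _ => by rw [hw_eq _ y.2]
    rw [hconv, ← Finset.sum_div, Finset.sum_add_distrib, hlam_mem.2, hu_sum]
    norm_num
  · intro i
    have hconv : ∑ x ∈ Y, w x * x i
        = ∑ y : ι, ((lam y + u y) / 2) * (y : Fin d → ℝ) i := by
      rw [Finset.univ_eq_attach, ← Finset.sum_attach Y (fun x => w x * x i)]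
      exact Finset.sum_congr rfl fun y _ => by rw [hw_eq _ y.2]
    rw [hconv]
    have hsplit : ∑ y : ι, ((lam y + u y) / 2) * (y : Fin d → ℝ) i
        = (m i + ∑ y : ι, u y * (y : Fin d → ℝ) i) / 2 := by
      rw [Finset.sum_congr rfl (fun y _ =>
        (by ring : ((lam y + u y) / 2) * (y : Fin d → ℝ) i
          = (lam y * (y : Fin d → ℝ) i + u y * (y : Fin d → ℝ) i) / 2))]
      rw [← Finset.sum_div, Finset.sum_add_distrib, hm]
    rw [hsplit]
    have := hu_cover i
    have := hm0 i
    linarith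
  · intro x hx
    have hx01 : ∀ i, 0 ≤ x i := by
      intro i; rcases h01 x hx i with h | h <;> rw [h] <;> norm_num
    have ha : ∀ i : Fin d, (δ + m i) / 2 ≤ ∑ y ∈ Y, w y * y i := by
      intro i
      have hconv : ∑ y ∈ Y, w y * y i
          = ∑ y : ι, ((lam y + u y) / 2) * (y : Fin d → ℝ) i := by
        rw [Finset.univ_eq_attach, ← Finset.sum_attach Y (fun x => w x * x i)]
        exact Finset.sum_congr rfl fun y _ => by rw [hw_eq _ y.2]
      have hsplit : ∑ y : ι, ((lam y + u y) / 2) * (y : Fin d → ℝ) i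
          = (m i + ∑ y : ι, u y * (y : Fin d → ℝ) i) / 2 := by
        rw [Finset.sum_congr rfl (fun y _ =>
          (by ring : ((lam y + u y) / 2) * (y : Fin d → ℝ) i
            = (lam y * (y : Fin d → ℝ) i + u y * (y : Fin d → ℝ) i) / 2))]
        rw [← Finset.sum_div, Finset.sum_add_distrib, hm]
      rw [hconv, hsplit]
      have := hu_cover i
      linarith
    have hterm : ∀ i : Fin d, x i / (∑ y ∈ Y, w y * y i) ≤ 2 * (x i / (δ + m i)) := by
      intro i
      have h2 : (0:ℝ) < (δ + m i) / 2 := by linarith [hmδ i]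
      calc x i / (∑ y ∈ Y, w y * y i) ≤ x i / ((δ + m i) / 2) :=
            div_le_div_of_nonneg_left (hx01 i) h2 (ha i)
        _ = 2 * (x i / (δ + m i)) := by
            rw [div_div_eq_mul_div]; ring
    calc ∑ i, x i / (∑ y ∈ Y, w y * y i) ≤ ∑ i, 2 * (x i / (δ + m i)) :=
          Finset.sum_le_sum fun i _ => hterm i
      _ = 2 * ∑ i, x i / (δ + m i) := by rw [Finset.mul_sum]
      _ ≤ 2 * d := by
          have := hFOC x hx
          linarith

end Design

/-- **Proposition 4 (semi-bandit case).** There is a universal constant `c > 0` such that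
for every `d ≥ 3` and every nonempty finite `Y ⊆ {0,1}^d \ {0}` covering all coordinates,
with `k = max_{x∈Y} ‖x‖₁`, there is a probability vector `w` on `Y` whose diagonal design
`A_semi(w)` has positive diagonal entries and whose squared Gaussian width
`(E_η[ max_{x∈Y} xᵀ A_semi(w)^{-1/2} η ])²` is at most `c · d · k · log d`. -/
theorem gaussian_width_semi_le_dk_logd :
    ∃ c : ℝ, 0 < c ∧
      ∀ (d : ℕ), 3 ≤ d →
      ∀ (Y : Finset (Fin d → ℝ)) (hY : Y.Nonempty),
        (∀ x ∈ Y, ∀ i, x i = 0 ∨ x i = 1) →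
        (∀ x ∈ Y, x ≠ 0) →
        (∀ i : Fin d, ∃ x ∈ Y, x i = 1) →
        ∃ w : (Fin d → ℝ) → ℝ,
          (∀ x ∈ Y, 0 ≤ w x) ∧ (∑ x ∈ Y, w x = 1) ∧
          (∀ i : Fin d, 0 < ∑ x ∈ Y, w x * x i) ∧
          (∫ η, Y.sup' hY
              (fun x => ∑ i, x i * η i / Real.sqrt (∑ y ∈ Y, w y * y i))
              ∂ stdGaussian d) ^ 2
            ≤ c * (d : ℝ) * (Y.sup' hY fun x => ∑ i, |x i|) * Real.log d := by
  classical
  refine ⟨8, by norm_num, ?_⟩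
  intro d hd3 Y hY h01 hnz hcov
  have hd : 0 < d := by omega
  obtain ⟨w, hw0, hw1, hwpos, hwvar⟩ := exists_good_design hd Y hY h01 hcov
  refine ⟨w, hw0, hw1, hwpos, ?_⟩
  set a : Fin d → ℝ := fun i => ∑ y ∈ Y, w y * y i with ha
  set cf : (Fin d → ℝ) → Fin d → ℝ := fun x i => x i / Real.sqrt (a i) with hcf
  -- rewrite the integrand
  have hfun : (fun η : Fin d → ℝ => Y.sup' hY
        (fun x => ∑ i, x i * η i / Real.sqrt (∑ y ∈ Y, w y * y i)))
      = fun η : Fin d → ℝ => Y.sup' hY (fun x => ∑ i, cf x i * η i) := by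
    funext η
    refine Finset.sup'_congr hY rfl fun x _ => ?_
    refine Finset.sum_congr rfl fun i _ => ?_
    rw [hcf, mul_div_right_comm]
  rw [hfun]
  -- variance bound
  have hvar : ∀ x ∈ Y, ∑ i, cf x i ^ 2 ≤ 2 * (d : ℝ) := by
    intro x hx
    have h1 : ∀ i : Fin d, cf x i ^ 2 = x i / a i := by
      intro i
      rw [hcf]
      rw [div_pow, Real.sq_sqrt (hwpos i).le]
      rcases h01 x hx i with h | h <;> rw [h] <;> norm_num <;> rfl
    rw [Finset.sum_congr rfl fun i _ => h1 i]
    exact hwvar x hx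
  have hwidth := width_sq_le Y hY cf (2 * (d : ℝ)) (by positivity) hvar
  -- counting
  set K : ℕ := Y.sup' hY (fun x => (Finset.univ.filter (fun i => x i = 1)).card) with hK
  have hKx : ∀ x ∈ Y, (Finset.univ.filter (fun i => x i = 1)).card ≤ K :=
    fun x hx => Finset.le_sup'
      (fun x : Fin d → ℝ => (Finset.univ.filter (fun i => x i = 1)).card) hx
  have hcard : Y.card ≤ (d + 1) ^ K := card_Y_le_pow Y h01 hKx
  have hK1 : 1 ≤ K := by
    obtain ⟨x, hx⟩ := hY
    have : ∃ i, x i = 1 := by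
      by_contra hno
      push_neg at hno
      apply hnz x hx
      funext i
      rcases h01 x hx i with h | h
      · exact h
      · exact absurd h (hno i)
    obtain ⟨i, hi⟩ := this
    calc 1 ≤ (Finset.univ.filter (fun j => x j = 1)).card := by
          rw [Nat.one_le_iff_ne_zero, ← Nat.pos_iff_ne_zero, Finset.card_pos]
          exact ⟨i, Finset.mem_filter.mpr ⟨Finset.mem_univ i, hi⟩⟩
      _ ≤ K := hKx x hx
  -- K as a real number is at most the sup of ℓ¹ norms
  have hsum_abs : ∀ x ∈ Y, ∑ i, |x i|
      = ((Finset.univ.filter (fun i => x i = 1)).card : ℝ) := by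
    intro x hx
    rw [Finset.sum_congr rfl (fun i _ => by
      rcases h01 x hx i with h | h <;> rw [h] <;> norm_num :
      ∀ i ∈ Finset.univ, |x i| = if x i = 1 then (1:ℝ) else 0)]
    rw [Finset.sum_boole]
  have hKle : (K : ℝ) ≤ Y.sup' hY fun x => ∑ i, |x i| := by
    obtain ⟨x, hx, hxe⟩ := Finset.exists_mem_eq_sup' hY
      (fun x => (Finset.univ.filter (fun i => x i = 1)).card)
    calc (K : ℝ) = ((Finset.univ.filter (fun i => x i = 1)).card : ℝ) := by
          rw [hK, hxe]
      _ = ∑ i, |x i| := (hsum_abs x hx).symm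
      _ ≤ Y.sup' hY fun x => ∑ i, |x i| :=
          Finset.le_sup' (fun x : Fin d → ℝ => ∑ i, |x i|) hx
  -- bound log (2 * card)
  have hd1 : (1:ℝ) < (d:ℝ) := by
    have h3 : (1:ℕ) < d := lt_of_lt_of_le (by norm_num) hd3
    exact_mod_cast h3
  have hlogd : 0 < Real.log d := Real.log_pos hd1
  have h2N : (2 * Y.card : ℝ) ≤ (d : ℝ) ^ (2 * K) := by
    have hnat : 2 * Y.card ≤ d ^ (2 * K) := by
      calc 2 * Y.card ≤ 2 * (d + 1) ^ K := Nat.mul_le_mul_left 2 hcard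
        _ ≤ 2 ^ K * (d + 1) ^ K := Nat.mul_le_mul_right _ (by
              calc 2 = 2 ^ 1 := (pow_one 2).symm
                _ ≤ 2 ^ K := Nat.pow_le_pow_right (by norm_num) hK1)
        _ = (2 * (d + 1)) ^ K := by rw [Nat.mul_pow]
        _ ≤ (d ^ 2) ^ K := Nat.pow_le_pow_left (by nlinarith) K
        _ = d ^ (2 * K) := by rw [← Nat.pow_mul]
    exact_mod_cast hnat
  have hlog2N : Real.log (2 * Y.card) ≤ (2 * K : ℝ) * Real.log d := by
    calc Real.log (2 * Y.card) ≤ Real.log ((d : ℝ) ^ (2 * K)) := by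
          apply Real.log_le_log (by positivity) h2N
      _ = (2 * K : ℝ) * Real.log d := by
          rw [Real.log_pow]; push_cast; ring
  -- combine
  have hcard1 : (1:ℝ) ≤ (Y.card : ℝ) := by
    exact_mod_cast Nat.one_le_iff_ne_zero.mpr (Finset.card_ne_zero_of_mem hY.choose_spec)
  refine hwidth.trans ?_
  have hKR : (1:ℝ) ≤ (K : ℝ) := by exact_mod_cast hK1
  have hsup_pos : (0:ℝ) < Y.sup' hY fun x => ∑ i, |x i| := lt_of_lt_of_le (by linarith) hKle
  calc 2 * Real.log (2 * Y.card) * (2 * d)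
      ≤ 2 * ((2 * K : ℝ) * Real.log d) * (2 * d) := by
        have hdpos : (0:ℝ) < d := by exact_mod_cast hd
        apply mul_le_mul_of_nonneg_right _ (by positivity)
        apply mul_le_mul_of_nonneg_left hlog2N (by norm_num)
    _ = 8 * (d : ℝ) * (K : ℝ) * Real.log d := by ring
    _ ≤ 8 * (d : ℝ) * (Y.sup' hY fun x => ∑ i, |x i|) * Real.log d := by
        have hdpos : (0:ℝ) < d := by exact_mod_cast hd
        apply mul_le_mul_of_nonneg_right _ hlogd.le
        apply mul_le_mul_of_nonneg_left hKle (by positivity)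
end

section
/- Let d ≥ 1 and let X ⊆ {0,1}^d be a finite set with ∪_{x∈X} supp(x) = {1,…,d}. For a probability vector λ on X with Σ_{x'∈X} λ_{x'} x'_i > 0 for all i ∈ {1,…,d}, write ‖x‖²_{A_semi(λ)^{-1}} = Σ_{i : x_i = 1} ( Σ_{x'∈X} λ_{x'} x'_i )^{-1}. Then: (a) for every such λ, max_{x∈X} ‖x‖²_{A_semi(λ)^{-1}} ≥ d; and (b) there exists such a λ with max_{x∈X} ‖x‖²_{A_semi(λ)^{-1}} ≤ d. Consequently inf_λ max_{x∈X} ‖x‖²_{A_semi(λ)^{-1}} = d. (This is the paper's Proposition 8, a Kiefer–Wolfowitz-type theorem for semi-bandit designs.) -/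
open Finset

private lemma onesided_deriv_nonpos {φ : ℝ → ℝ} {D : ℝ} (hD : HasDerivAt φ D 0)
    (h : ∀ t ∈ Set.Ioc (0:ℝ) 1, φ t ≤ φ 0) : D ≤ 0 := by
  have h1 : Filter.Tendsto (slope φ 0) (nhdsWithin 0 {(0:ℝ)}ᶜ) (nhds D) :=
    hasDerivAt_iff_tendsto_slope.mp hD
  have h2 : Filter.Tendsto (slope φ 0) (nhdsWithin 0 (Set.Ioi 0)) (nhds D) :=
    h1.mono_left (nhdsWithin_mono _ (fun t ht => ne_of_gt ht))
  refine le_of_tendsto h2 ?_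
  filter_upwards [Ioc_mem_nhdsGT_of_mem (Set.mem_Ico.mpr ⟨le_refl (0:ℝ), one_pos⟩)] with t ht
  have h3 := h t ht
  have ht0 : 0 < t := ht.1
  rw [slope_def_field]
  have : φ t - φ 0 ≤ 0 := by linarith
  apply div_nonpos_of_nonpos_of_nonneg this (by linarith)

/-- **Proposition 8 (Kiefer–Wolfowitz for semi-bandit designs).** For a finite
`X ⊆ {0,1}^d` covering all coordinates: (a) every probability vector `w` on `X` with
positive design entries satisfies `max_{x∈X} ‖x‖²_{A_semi(w)⁻¹} ≥ d`, and (b) some such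
`w` satisfies `max_{x∈X} ‖x‖²_{A_semi(w)⁻¹} ≤ d`; consequently the infimum equals `d`. -/
theorem kiefer_wolfowitz_semibandit (d : ℕ) (hd : 1 ≤ d)
    (X : Finset (Fin d → ℝ)) (hX : X.Nonempty)
    (h01 : ∀ x ∈ X, ∀ i, x i = 0 ∨ x i = 1)
    (hcov : ∀ i : Fin d, ∃ x ∈ X, x i = 1) :
    (∀ w : (Fin d → ℝ) → ℝ, (∀ x ∈ X, 0 ≤ w x) → (∑ x ∈ X, w x = 1) →
      (∀ i : Fin d, 0 < ∑ x ∈ X, w x * x i) →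
      (d : ℝ) ≤ X.sup' hX (fun x => ∑ i, x i ^ 2 / (∑ y ∈ X, w y * y i))) ∧
    (∃ w : (Fin d → ℝ) → ℝ, (∀ x ∈ X, 0 ≤ w x) ∧ (∑ x ∈ X, w x = 1) ∧
      (∀ i : Fin d, 0 < ∑ x ∈ X, w x * x i) ∧
      X.sup' hX (fun x => ∑ i, x i ^ 2 / (∑ y ∈ X, w y * y i)) ≤ (d : ℝ)) := by
  classical
  have hsq : ∀ x ∈ X, ∀ i, x i ^ 2 = x i := fun x hx i => by
    rcases h01 x hx i with h | h <;> simp [h]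
  have hnn : ∀ x ∈ X, ∀ i, (0:ℝ) ≤ x i := fun x hx i => by
    rcases h01 x hx i with h | h <;> simp [h]
  constructor
  · -- Part (a)
    intro w hw0 hw1 hpos
    set M := X.sup' hX (fun x => ∑ i, x i ^ 2 / (∑ y ∈ X, w y * y i)) with hM
    have hdd : (d:ℝ) = ∑ x ∈ X, w x * (∑ i, x i ^ 2 / (∑ y ∈ X, w y * y i)) := by
      have e1 : ∑ x ∈ X, w x * (∑ i, x i ^ 2 / (∑ y ∈ X, w y * y i))
          = ∑ i : Fin d, (∑ x ∈ X, w x * x i ^ 2) / (∑ y ∈ X, w y * y i) := by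
        simp_rw [Finset.mul_sum]
        rw [Finset.sum_comm]
        congr 1; ext i
        rw [Finset.sum_div]
        congr 1; ext x
        ring
      rw [e1]
      have e2 : ∀ i : Fin d, (∑ x ∈ X, w x * x i ^ 2) / (∑ y ∈ X, w y * y i) = 1 := by
        intro i
        have : ∑ x ∈ X, w x * x i ^ 2 = ∑ y ∈ X, w y * y i :=
          Finset.sum_congr rfl fun x hx => by rw [hsq x hx i]
        rw [this, div_self (ne_of_gt (hpos i))]
      simp [e2]
    rw [hdd]
    calc ∑ x ∈ X, w x * (∑ i, x i ^ 2 / (∑ y ∈ X, w y * y i))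
        ≤ ∑ x ∈ X, w x * M := by
          refine Finset.sum_le_sum fun x hx => ?_
          exact mul_le_mul_of_nonneg_left (Finset.le_sup' (fun x => ∑ i, x i ^ 2 / (∑ y ∈ X, w y * y i)) hx) (hw0 x hx)
      _ = M := by rw [← Finset.sum_mul, hw1, one_mul]
  · -- Part (b)
    let A : ({x // x ∈ X} → ℝ) → Fin d → ℝ :=
      fun v i => ∑ x ∈ X.attach, v x * (x : Fin d → ℝ) i
    let g : ({x // x ∈ X} → ℝ) → ℝ := fun v => ∏ i, A v i
    have hgcont : Continuous g := by
      apply continuous_finset_prod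
      intro i _
      apply continuous_finset_sum
      intro x _
      exact (continuous_apply x).mul continuous_const
    have hcard : (0:ℝ) < X.card := by exact_mod_cast Finset.card_pos.mpr hX
    have hv0mem : (fun _ : {x // x ∈ X} => (X.card : ℝ)⁻¹) ∈ stdSimplex ℝ {x // x ∈ X} := by
      constructor
      · intro x; positivity
      · rw [Finset.sum_const, Finset.card_univ, Fintype.card_coe, nsmul_eq_mul]
        field_simp
    obtain ⟨v, hvmem, hvmax⟩ :=
      (isCompact_stdSimplex _ _).exists_isMaxOn ⟨_, hv0mem⟩ hgcont.continuousOn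
    have hvmem' := hvmem
    rw [stdSimplex, Set.mem_setOf_eq] at hvmem'
    obtain ⟨hvnn, hvsum⟩ := hvmem'
    -- positivity of g at the uniform vector
    have hg0 : 0 < g (fun _ => (X.card : ℝ)⁻¹) := by
      apply Finset.prod_pos
      intro i _
      have : A (fun _ => (X.card : ℝ)⁻¹) i = (X.card : ℝ)⁻¹ * ∑ x ∈ X, x i := by
        rw [Finset.mul_sum, ← Finset.sum_attach X (fun x => (X.card : ℝ)⁻¹ * x i)]
      rw [this]
      apply mul_pos (by positivity)
      obtain ⟨x0, hx0, hx0i⟩ := hcov i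
      exact Finset.sum_pos' (fun x hx => hnn x hx i) ⟨x0, hx0, by rw [hx0i]; norm_num⟩
    have hgv : 0 < g v := lt_of_lt_of_le hg0 (hvmax (Set.mem_setOf_eq ▸ hv0mem))
    -- each design entry positive
    have hAnn : ∀ i, 0 ≤ A v i := by
      intro i
      apply Finset.sum_nonneg
      intro x _
      exact mul_nonneg (hvnn x) (hnn x x.2 i)
    have hApos : ∀ i, 0 < A v i := by
      intro i
      rcases lt_or_eq_of_le (hAnn i) with h | h
      · exact h
      · exfalso
        have : g v = 0 := Finset.prod_eq_zero (Finset.mem_univ i) h.symm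
        rw [this] at hgv; exact lt_irrefl 0 hgv
    -- the witness
    refine ⟨fun x => if h : x ∈ X then v ⟨x, h⟩ else 0, ?_, ?_, ?_, ?_⟩
    · intro x hx; simp only [dif_pos hx]; exact hvnn _
    · rw [← Finset.sum_attach X (fun x => if h : x ∈ X then v ⟨x, h⟩ else 0)]
      rw [← hvsum]
      exact Finset.sum_congr rfl fun x _ => by rw [dif_pos x.2]
    · intro i
      have : ∑ x ∈ X, (if h : x ∈ X then v ⟨x, h⟩ else 0) * x i = A v i := by
        rw [← Finset.sum_attach X (fun x => (if h : x ∈ X then v ⟨x, h⟩ else 0) * x i)]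
        exact Finset.sum_congr rfl fun x _ => by rw [dif_pos x.2]
      rw [this]; exact hApos i
    · -- max ≤ d via first-order condition
      apply Finset.sup'_le
      intro x₀ hx₀
      have hden : ∀ i, ∑ y ∈ X, (if h : y ∈ X then v ⟨y, h⟩ else 0) * y i = A v i := by
        intro i
        rw [← Finset.sum_attach X (fun y => (if h : y ∈ X then v ⟨y, h⟩ else 0) * y i)]
        exact Finset.sum_congr rfl fun y _ => by rw [dif_pos y.2]
      simp_rw [hden]
      have hsq0 : ∀ i, x₀ i ^ 2 = x₀ i := hsq x₀ hx₀
      simp_rw [hsq0]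
      -- first order condition
      set a : Fin d → ℝ := A v with ha
      set b : Fin d → ℝ := x₀ with hb
      set φ : ℝ → ℝ := fun t => ∏ i, ((1 - t) * a i + t * b i) with hφ
      have hmax : ∀ t ∈ Set.Ioc (0:ℝ) 1, φ t ≤ φ 0 := by
        intro t ht
        set e : {x // x ∈ X} → ℝ := fun y => if y = ⟨x₀, hx₀⟩ then 1 else 0 with he
        set vt : {x // x ∈ X} → ℝ := fun y => (1 - t) * v y + t * e y with hvt
        have hvtmem : vt ∈ stdSimplex ℝ {x // x ∈ X} := by
          constructor
          · intro y
            apply add_nonneg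
            · exact mul_nonneg (by linarith [ht.2]) (hvnn y)
            · apply mul_nonneg (le_of_lt ht.1)
              simp only [he]; split <;> norm_num
          · rw [Finset.sum_add_distrib]
            simp_rw [← Finset.mul_sum]
            rw [hvsum]
            have : ∑ y ∈ Finset.univ, e y = 1 := by
              simp [he, Finset.sum_ite_eq']
            rw [this]; ring
        have hφt : g vt = φ t := by
          apply Finset.prod_congr rfl
          intro i _
          show (∑ x ∈ X.attach, vt x * (x : Fin d → ℝ) i) = (1 - t) * a i + t * b i
          have : ∀ x ∈ X.attach, vt x * (x : Fin d → ℝ) i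
              = (1 - t) * (v x * (x : Fin d → ℝ) i) + t * (e x * (x : Fin d → ℝ) i) := by
            intro x _; simp only [hvt]; ring
          rw [Finset.sum_congr rfl this, Finset.sum_add_distrib, ← Finset.mul_sum,
            ← Finset.mul_sum]
          congr 1
          congr 1
          have : ∑ x ∈ X.attach, e x * (x : Fin d → ℝ) i
              = ∑ x ∈ X.attach, (if x = ⟨x₀, hx₀⟩ then ((⟨x₀, hx₀⟩ : {x // x ∈ X}) : Fin d → ℝ) i else 0) := by
            apply Finset.sum_congr rfl
            intro x _
            simp only [he]
            split
            · next h => subst h; ring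
            · ring
          rw [this, Finset.sum_ite_eq' X.attach ⟨x₀, hx₀⟩
            (fun x => ((⟨x₀, hx₀⟩ : {x // x ∈ X}) : Fin d → ℝ) i)]
          simp [hb]
        have hφ0 : g v = φ 0 := by
          apply Finset.prod_congr rfl
          intro i _
          simp [ha]
        rw [← hφt, ← hφ0]
        exact hvmax hvtmem
      have hderiv : HasDerivAt φ (∑ i, (∏ j ∈ Finset.univ.erase i, a j) * (b i - a i)) 0 := by
        have hf : ∀ i ∈ (Finset.univ : Finset (Fin d)),
            HasDerivAt (fun t : ℝ => (1 - t) * a i + t * b i) (b i - a i) 0 := by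
          intro i _
          have h1 : HasDerivAt (fun t : ℝ => (1 - t) * a i) (-(a i)) 0 := by
            simpa using ((hasDerivAt_id (0:ℝ)).const_sub 1).mul_const (a i)
          have h2 : HasDerivAt (fun t : ℝ => t * b i) (b i) 0 :=
            by simpa using (hasDerivAt_id (0:ℝ)).mul_const (b i)
          have := h1.add h2
          exact this.congr_deriv (by ring)
        have := HasDerivAt.fun_finsetProd hf
        refine this.congr_deriv ?_
        apply Finset.sum_congr rfl
        intro i _
        rw [smul_eq_mul]
        congr 1
        apply Finset.prod_congr rfl
        intro j _
        ring
      have hD : (∑ i, (∏ j ∈ Finset.univ.erase i, a j) * (b i - a i)) ≤ 0 :=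
        onesided_deriv_nonpos hderiv hmax
      -- conclude ∑ b i / a i ≤ d
      set P : ℝ := ∏ i, a i with hP
      have hPpos : 0 < P := Finset.prod_pos fun i _ => hApos i
      have herase : ∀ i : Fin d, (∏ j ∈ Finset.univ.erase i, a j) = P / a i := by
        intro i
        rw [eq_div_iff (ne_of_gt (hApos i)), hP]
        exact Finset.prod_erase_mul Finset.univ a (Finset.mem_univ i)
      have hsum : ∑ i, P * (b i / a i) ≤ ∑ _i : Fin d, (P : ℝ) := by
        have expand : ∀ i : Fin d, (∏ j ∈ Finset.univ.erase i, a j) * (b i - a i)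
            = P * (b i / a i) - P := by
          intro i
          rw [herase i]
          field_simp
          rw [sub_div, div_self (ne_of_gt (hApos i))]
        calc ∑ i, P * (b i / a i) = ∑ i, ((∏ j ∈ Finset.univ.erase i, a j) * (b i - a i) + P) := by
              apply Finset.sum_congr rfl; intro i _; rw [expand i]; ring
          _ = (∑ i, (∏ j ∈ Finset.univ.erase i, a j) * (b i - a i)) + ∑ _i : Fin d, (P : ℝ) := by
              rw [Finset.sum_add_distrib]
          _ ≤ ∑ _i : Fin d, (P : ℝ) := by linarith
      rw [← Finset.mul_sum] at hsum
      have hd' : ∑ _i : Fin d, (P : ℝ) = P * d := by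
        rw [Finset.sum_const, Finset.card_univ, Fintype.card_fin, nsmul_eq_mul]; ring
      rw [hd'] at hsum
      exact le_of_mul_le_mul_left hsum hPpos
end

section
/- Let X ⊆ {0,1}^d and V ⊆ ℝ^d be finite sets, and let D ⊆ Δ_X be the set of probability vectors λ on X whose design A_semi(λ) has all diagonal entries positive. Then the function f(λ) = E_η[ max_{v∈V} v^⊤ A_semi(λ)^{-1/2} η ] is convex on D: for all λ, κ ∈ D and α ∈ [0,1], f(α λ + (1−α) κ) ≤ α f(λ) + (1−α) f(κ). (This is the paper's Proposition 13.) -/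
open MeasureTheory ProbabilityTheory

/-- The Gaussian-width objective `f(w) = E_η[max_{v∈V} vᵀ A_semi(w)^{-1/2} η]` for a
semi-bandit design given by a weight function `w` on the arm set `X`. -/
noncomputable def semiGaussWidth (d : ℕ) (X V : Finset (Fin d → ℝ)) (hV : V.Nonempty)
    (w : (Fin d → ℝ) → ℝ) : ℝ :=
  ∫ η, V.sup' hV (fun v => ∑ i, v i * η i / Real.sqrt (∑ x ∈ X, w x * x i))
    ∂ stdGaussian d

instance inst_s8 (d : ℕ) : IsProbabilityMeasure (stdGaussian d) := by
  unfold _root_.stdGaussian; infer_instance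

lemma integrable_id_gaussian : Integrable id (gaussianReal 0 1) := by
  rw [gaussianReal_of_var_ne_zero 0 one_ne_zero]
  rw [integrable_withDensity_iff (measurable_gaussianPDF 0 1)
    (ae_of_all _ fun x => ENNReal.ofReal_lt_top)]
  have : (fun x : ℝ => id x * (gaussianPDF 0 1 x).toReal)
      = fun x : ℝ => (Real.sqrt (2 * Real.pi))⁻¹ * (x * Real.exp (-(1/2) * x ^ 2)) := by
    funext x
    rw [gaussianPDF_def, ENNReal.toReal_ofReal (gaussianPDFReal_nonneg 0 1 x),
      gaussianPDFReal]
    push_cast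
    simp only [id_eq]
    ring_nf
  rw [this]
  exact (integrable_mul_exp_neg_mul_sq (by norm_num : (0:ℝ) < 1/2)).const_mul _

lemma map_eval_stdGaussian (d : ℕ) (i : Fin d) :
    (stdGaussian d).map (fun η => η i) = gaussianReal 0 1 := by
  ext s hs
  rw [Measure.map_apply (measurable_pi_apply i) hs]
  have : (fun η : Fin d → ℝ => η i) ⁻¹' s
      = Set.pi Set.univ (Function.update (fun _ => Set.univ) i s) := by
    ext η
    simp only [Set.mem_preimage, Set.mem_pi, Set.mem_univ, forall_true_left]
    constructor
    · intro h j
      rcases eq_or_ne j i with rfl | hj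
      · simpa using h
      · simp [Function.update_of_ne hj]
    · intro h
      have := h i
      simpa using this
  rw [this, _root_.stdGaussian, Measure.pi_pi]
  rw [Finset.prod_eq_single i]
  · simp
  · intro j _ hj
    simp [Function.update_of_ne hj]
  · simp

lemma integrable_coord (d : ℕ) (i : Fin d) :
    Integrable (fun η : Fin d → ℝ => η i) (stdGaussian d) := by
  have h := integrable_id_gaussian
  rw [← map_eval_stdGaussian d i] at h
  exact (integrable_map_measure h.aestronglyMeasurable
    (measurable_pi_apply i).aemeasurable).mp h

lemma integrable_lin (d : ℕ) (r : Fin d → ℝ) :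
    Integrable (fun η : Fin d → ℝ => ∑ i, r i * η i) (stdGaussian d) :=
  integrable_finset_sum _ fun i _ => (integrable_coord d i).const_mul (r i)

lemma integrable_sup' {α : Type*} [MeasurableSpace α] {μ : Measure α} {ι : Type*}
    (V : Finset ι) (hV : V.Nonempty) (f : ι → α → ℝ)
    (hf : ∀ v ∈ V, Integrable (f v) μ) :
    Integrable (fun a => V.sup' hV (fun v => f v a)) μ := by
  induction hV using Finset.Nonempty.cons_induction with
  | singleton v => simpa using hf v (by simp)
  | cons v s hvs hs ih =>
    simp only [Finset.sup'_cons hs]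
    exact (hf v (by simp)).sup (ih fun u hu => hf u (by simp [hu]))

noncomputable def GW (d : ℕ) (V : Finset (Fin d → ℝ)) (hV : V.Nonempty) (u : Fin d → ℝ) : ℝ :=
  ∫ η, V.sup' hV (fun v => ∑ i, v i * η i * u i) ∂ stdGaussian d

lemma integrable_GW (d : ℕ) (V : Finset (Fin d → ℝ)) (hV : V.Nonempty) (u : Fin d → ℝ) :
    Integrable (fun η => V.sup' hV (fun v => ∑ i, v i * η i * u i)) (stdGaussian d) := by
  refine integrable_sup' V hV _ fun v _ => ?_
  have : (fun η : Fin d → ℝ => ∑ i, v i * η i * u i)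
      = fun η : Fin d → ℝ => ∑ i, (v i * u i) * η i := by
    funext η; exact Finset.sum_congr rfl fun i _ => by ring
  rw [this]
  exact integrable_lin d _

lemma GW_convex (d : ℕ) (V : Finset (Fin d → ℝ)) (hV : V.Nonempty) (u w : Fin d → ℝ)
    (θ : ℝ) (hθ0 : 0 ≤ θ) (hθ1 : θ ≤ 1) :
    GW d V hV (fun i => θ * u i + (1 - θ) * w i) ≤ θ * GW d V hV u + (1 - θ) * GW d V hV w := by
  have hθ1' : 0 ≤ 1 - θ := by linarith
  have hInt1 := integrable_GW d V hV u
  have hInt2 := integrable_GW d V hV w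
  have key : ∀ η : Fin d → ℝ,
      V.sup' hV (fun v => ∑ i, v i * η i * (θ * u i + (1 - θ) * w i))
        ≤ θ * V.sup' hV (fun v => ∑ i, v i * η i * u i)
          + (1 - θ) * V.sup' hV (fun v => ∑ i, v i * η i * w i) := by
    intro η
    refine Finset.sup'_le hV _ fun v hv => ?_
    have h1 : ∑ i, v i * η i * (θ * u i + (1 - θ) * w i)
        = θ * (∑ i, v i * η i * u i) + (1 - θ) * (∑ i, v i * η i * w i) := by
      rw [Finset.mul_sum, Finset.mul_sum, ← Finset.sum_add_distrib]
      exact Finset.sum_congr rfl fun i _ => by ring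
    rw [h1]
    gcongr
    · exact Finset.le_sup' (fun v => ∑ i, v i * η i * u i) hv
    · exact Finset.le_sup' (fun v => ∑ i, v i * η i * w i) hv
  calc GW d V hV (fun i => θ * u i + (1 - θ) * w i)
      ≤ ∫ η, (θ * V.sup' hV (fun v => ∑ i, v i * η i * u i)
          + (1 - θ) * V.sup' hV (fun v => ∑ i, v i * η i * w i)) ∂ stdGaussian d := by
        refine integral_mono (integrable_GW d V hV _) ?_ key
        exact (hInt1.const_mul θ).add (hInt2.const_mul (1 - θ))
    _ = θ * GW d V hV u + (1 - θ) * GW d V hV w := by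
        rw [integral_add (hInt1.const_mul θ) (hInt2.const_mul (1 - θ)),
          integral_const_mul, integral_const_mul]
        rfl

/-- Flipping the sign of coordinate `j`, as a measurable equivalence. -/
noncomputable def flipCoord (d : ℕ) (j : Fin d) : (Fin d → ℝ) ≃ᵐ (Fin d → ℝ) where
  toFun η := Function.update η j (-η j)
  invFun η := Function.update η j (-η j)
  left_inv η := by
    funext i
    by_cases hij : i = j
    · subst hij; simp
    · simp [Function.update_of_ne hij]
  right_inv η := by
    funext i
    by_cases hij : i = j
    · subst hij; simp
    · simp [Function.update_of_ne hij]
  measurable_toFun := by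
    show Measurable fun η : Fin d → ℝ => Function.update η j (-η j)
    refine measurable_pi_lambda _ fun i => ?_
    by_cases hij : i = j
    · subst hij
      simp only [Function.update_self]
      exact (measurable_pi_apply i).neg
    · simp only [Function.update_of_ne hij]
      exact measurable_pi_apply i
  measurable_invFun := by
    show Measurable fun η : Fin d → ℝ => Function.update η j (-η j)
    refine measurable_pi_lambda _ fun i => ?_
    by_cases hij : i = j
    · subst hij
      simp only [Function.update_self]
      exact (measurable_pi_apply i).neg
    · simp only [Function.update_of_ne hij]
      exact measurable_pi_apply i

lemma gaussian_neg_preimage (s : Set ℝ) (hs : MeasurableSet s) :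
    gaussianReal 0 1 (Neg.neg ⁻¹' s) = gaussianReal 0 1 s := by
  have h2 : (gaussianReal 0 1).map ((-1 : ℝ) * ·) = gaussianReal 0 1 := by
    rw [gaussianReal_map_const_mul (μ := 0) (v := 1) (-1)]
    norm_num
  have h3 : ((-1 : ℝ) * ·) ⁻¹' s = Neg.neg ⁻¹' s := by
    ext x; simp
  rw [← h3, ← Measure.map_apply (by fun_prop) hs, h2]

lemma flipCoord_measurePreserving (d : ℕ) (j : Fin d) :
    MeasurePreserving (flipCoord d j) (stdGaussian d) (stdGaussian d) := by
  refine ⟨(flipCoord d j).measurable, ?_⟩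
  have hpi : ((stdGaussian d).map (flipCoord d j)) = Measure.pi fun _ => gaussianReal 0 1 := by
    refine (Measure.pi_eq (μ' := (stdGaussian d).map (flipCoord d j)) (μ := fun _ : Fin d => gaussianReal 0 1) fun s hs => ?_).symm
    rw [Measure.map_apply (flipCoord d j).measurable (MeasurableSet.univ_pi hs)]
    have hpre : (flipCoord d j) ⁻¹' (Set.pi Set.univ s)
        = Set.pi Set.univ (fun i => if i = j then Neg.neg ⁻¹' s i else s i) := by
      ext η
      simp only [Set.mem_preimage, Set.mem_pi, Set.mem_univ, forall_true_left]
      refine forall_congr' fun i => ?_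
      by_cases hij : i = j
      · subst hij
        simp [flipCoord]
      · simp [flipCoord, Function.update_of_ne hij, hij]
    rw [hpre, _root_.stdGaussian, Measure.pi_pi]
    refine Finset.prod_congr rfl fun i _ => ?_
    by_cases hij : i = j
    · subst hij
      simp only [if_pos rfl]
      exact gaussian_neg_preimage _ (hs i)
    · simp [hij]
  rw [hpi]; rfl

lemma GW_flip (d : ℕ) (V : Finset (Fin d → ℝ)) (hV : V.Nonempty) (u : Fin d → ℝ)
    (j : Fin d) (t : ℝ) :
    GW d V hV (Function.update u j (-t)) = GW d V hV (Function.update u j t) := by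
  unfold GW
  rw [← (flipCoord_measurePreserving d j).integral_comp
    (MeasurableEquiv.measurableEmbedding (flipCoord d j))]
  congr 1
  funext η
  refine Finset.sup'_congr hV rfl fun v _ => ?_
  refine Finset.sum_congr rfl fun i _ => ?_
  by_cases hij : i = j
  · subst hij
    simp [flipCoord]
  · simp [flipCoord, Function.update_of_ne hij]

lemma GW_mono_coord (d : ℕ) (V : Finset (Fin d → ℝ)) (hV : V.Nonempty) (u : Fin d → ℝ)
    (j : Fin d) (t₁ t₂ : ℝ) (h0 : 0 ≤ t₁) (h12 : t₁ ≤ t₂) :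
    GW d V hV (Function.update u j t₁) ≤ GW d V hV (Function.update u j t₂) := by
  rcases eq_or_lt_of_le (h0.trans h12) with h2 | h2
  · have ht1 : t₁ = t₂ := le_antisymm h12 (h2 ▸ h0)
    rw [ht1]
  · set θ : ℝ := (t₂ + t₁) / (2 * t₂) with hθ
    have hθ0 : 0 ≤ θ := by positivity
    have hθ1 : θ ≤ 1 := by
      rw [div_le_one (by positivity)]
      linarith
    have hcomb : Function.update u j t₁
        = fun i => θ * (Function.update u j t₂) i + (1 - θ) * (Function.update u j (-t₂)) i := by
      funext i
      by_cases hij : i = j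
      · subst hij
        have ht2 : t₂ ≠ 0 := ne_of_gt h2
        simp only [Function.update_self, hθ]
        field_simp
        ring
      · simp only [Function.update_of_ne hij]
        ring
    calc GW d V hV (Function.update u j t₁)
        ≤ θ * GW d V hV (Function.update u j t₂)
          + (1 - θ) * GW d V hV (Function.update u j (-t₂)) := by
          rw [hcomb]
          exact GW_convex d V hV _ _ θ hθ0 hθ1
      _ = GW d V hV (Function.update u j t₂) := by
          rw [GW_flip]
          ring

lemma GW_mono (d : ℕ) (V : Finset (Fin d → ℝ)) (hV : V.Nonempty) (s m : Fin d → ℝ)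
    (hs : ∀ i, 0 ≤ s i) (hsm : ∀ i, s i ≤ m i) :
    GW d V hV s ≤ GW d V hV m := by
  have key : ∀ T : Finset (Fin d),
      GW d V hV s ≤ GW d V hV (fun i => if i ∈ T then m i else s i) := by
    intro T
    induction T using Finset.induction_on with
    | empty => simp
    | @insert j T hj ih =>
      set uT : Fin d → ℝ := fun i => if i ∈ T then m i else s i with huT
      have h1 : (fun i => if i ∈ insert j T then m i else s i)
          = Function.update uT j (m j) := by
        funext i
        by_cases hij : i = j
        · subst hij
          simp [Function.update_self, uT]
        · simp [Function.update_of_ne hij, Finset.mem_insert, hij, uT]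
      have h2 : uT = Function.update uT j (s j) := by
        funext i
        by_cases hij : i = j
        · subst hij
          simp [Function.update_self, uT, hj]
        · simp [Function.update_of_ne hij]
      calc GW d V hV s ≤ GW d V hV uT := ih
        _ ≤ GW d V hV (fun i => if i ∈ insert j T then m i else s i) := by
            rw [h1]
            nth_rewrite 1 [h2]
            exact GW_mono_coord d V hV uT j (s j) (m j) (hs j) (hsm j)
  have := key Finset.univ
  simpa using this

set_option maxHeartbeats 1000000 in
lemma inv_sqrt_convex (a b : ℝ) (ha : 0 < a) (hb : 0 < b) (α : ℝ) (hα0 : 0 ≤ α) (hα1 : α ≤ 1) :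
    (Real.sqrt (α * a + (1 - α) * b))⁻¹
      ≤ α * (Real.sqrt a)⁻¹ + (1 - α) * (Real.sqrt b)⁻¹ := by
  have h1α : 0 ≤ 1 - α := by linarith
  set p := Real.sqrt a with hp
  set q := Real.sqrt b with hq
  have hp0 : 0 < p := Real.sqrt_pos.mpr ha
  have hq0 : 0 < q := Real.sqrt_pos.mpr hb
  have hp2 : p ^ 2 = a := Real.sq_sqrt ha.le
  have hq2 : q ^ 2 = b := Real.sq_sqrt hb.le
  have hc : 0 < α * a + (1 - α) * b := by
    rcases le_total b a with h | h
    · nlinarith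
    · nlinarith
  set r := Real.sqrt (α * a + (1 - α) * b) with hr
  have hr0 : 0 < r := Real.sqrt_pos.mpr hc
  have hr2 : r ^ 2 = α * a + (1 - α) * b := Real.sq_sqrt hc.le
  set y : ℝ := α * p⁻¹ + (1 - α) * q⁻¹ with hy
  have hy0 : 0 ≤ y := by positivity
  -- polynomial certificate
  have e1 : 0 ≤ α ^ 2 * (1 - α) * (q * ((p - q) ^ 2 * (2 * p + q))) := by positivity
  have e2 : 0 ≤ α * (1 - α) ^ 2 * (p * ((p - q) ^ 2 * (p + 2 * q))) := by positivity
  have hpoly : p ^ 2 * q ^ 2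
      ≤ (α * p ^ 2 + (1 - α) * q ^ 2) * (α * q + (1 - α) * p) ^ 2 := by nlinarith [e1, e2]
  have hyp : y * (p * q) = α * q + (1 - α) * p := by
    rw [hy]
    field_simp
  have hkey : 1 ≤ r * y := by
    have hsq : 1 ≤ (r * y) ^ 2 := by
      have h3 : (r * y) ^ 2 * (p * q) ^ 2 = (α * p ^ 2 + (1 - α) * q ^ 2)
          * (α * q + (1 - α) * p) ^ 2 := by
        have : (r * y) ^ 2 * (p * q) ^ 2 = r ^ 2 * (y * (p * q)) ^ 2 := by ring
        rw [this, hyp, hr2, hp2, hq2]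
      have hpq : 0 < (p * q) ^ 2 := by positivity
      nlinarith [h3, hpoly, hpq]
    nlinarith [hsq, mul_nonneg hr0.le hy0]
  rw [inv_eq_one_div, div_le_iff₀ hr0]
  nlinarith [hkey]

lemma semiGaussWidth_eq_GW (d : ℕ) (X V : Finset (Fin d → ℝ)) (hV : V.Nonempty)
    (w : (Fin d → ℝ) → ℝ) :
    semiGaussWidth d X V hV w
      = GW d V hV (fun i => (Real.sqrt (∑ x ∈ X, w x * x i))⁻¹) := by
  unfold semiGaussWidth GW
  simp_rw [div_eq_mul_inv]

/-- **Proposition 13.** For finite `X ⊆ {0,1}^d` and finite `V ⊆ ℝ^d`, the function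
`λ ↦ E_η[max_{v∈V} vᵀ A_semi(λ)^{-1/2} η]` is convex on the set of probability vectors on
`X` whose design has all diagonal entries positive. -/
theorem semi_gauss_width_convex (d : ℕ) (X V : Finset (Fin d → ℝ)) (hV : V.Nonempty)
    (h01 : ∀ x ∈ X, ∀ i, x i = 0 ∨ x i = 1)
    (w₁ w₂ : (Fin d → ℝ) → ℝ)
    (hw₁0 : ∀ x ∈ X, 0 ≤ w₁ x) (hw₁1 : ∑ x ∈ X, w₁ x = 1)
    (hw₁pos : ∀ i : Fin d, 0 < ∑ x ∈ X, w₁ x * x i)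
    (hw₂0 : ∀ x ∈ X, 0 ≤ w₂ x) (hw₂1 : ∑ x ∈ X, w₂ x = 1)
    (hw₂pos : ∀ i : Fin d, 0 < ∑ x ∈ X, w₂ x * x i)
    (α : ℝ) (hα0 : 0 ≤ α) (hα1 : α ≤ 1) :
    semiGaussWidth d X V hV (fun x => α * w₁ x + (1 - α) * w₂ x) ≤
      α * semiGaussWidth d X V hV w₁ + (1 - α) * semiGaussWidth d X V hV w₂ := by
  have hc : ∀ i : Fin d, (∑ x ∈ X, (α * w₁ x + (1 - α) * w₂ x) * x i)
      = α * (∑ x ∈ X, w₁ x * x i) + (1 - α) * (∑ x ∈ X, w₂ x * x i) := by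
    intro i
    rw [Finset.mul_sum, Finset.mul_sum, ← Finset.sum_add_distrib]
    exact Finset.sum_congr rfl fun x _ => by ring
  set u₁ : Fin d → ℝ := fun i => (Real.sqrt (∑ x ∈ X, w₁ x * x i))⁻¹ with hu₁
  set u₂ : Fin d → ℝ := fun i => (Real.sqrt (∑ x ∈ X, w₂ x * x i))⁻¹ with hu₂
  rw [semiGaussWidth_eq_GW, semiGaussWidth_eq_GW, semiGaussWidth_eq_GW]
  calc GW d V hV (fun i => (Real.sqrt (∑ x ∈ X, (α * w₁ x + (1 - α) * w₂ x) * x i))⁻¹)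
      ≤ GW d V hV (fun i => α * u₁ i + (1 - α) * u₂ i) := by
        refine GW_mono d V hV _ _ (fun i => by positivity) fun i => ?_
        rw [hc i]
        exact inv_sqrt_convex _ _ (hw₁pos i) (hw₂pos i) α hα0 hα1
    _ ≤ α * GW d V hV u₁ + (1 - α) * GW d V hV u₂ := GW_convex d V hV u₁ u₂ α hα0 hα1
end

section
/- Let m ≥ 1, let Ω ⊆ ℝ^m be a nonempty compact convex set with ℓ₁-diameter at most D (i.e., ‖w − w'‖₁ ≤ D for all w, w' ∈ Ω), and let f : ℝ^m → ℝ be convex and differentiable with ‖∇f(x) − ∇f(y)‖_∞ ≤ L ‖x − y‖₁ for all x, y ∈ ℝ^m. Let w* be a minimizer of f over Ω and set q_r = 2/(r+1). Suppose sequences (w_r)_{r≥1} in Ω, (g_r)_{r≥1} in ℝ^m, and (v_r)_{r≥1} in Ω satisfy, for every r ≥ 1: v_r minimizes v ↦ ⟨g_r, v⟩ over Ω, w_{r+1} = q_r v_r + (1 − q_r) w_r, and ‖g_r − ∇f(w_r)‖_∞ ≤ L·D·q_r / 2. Then for every r ≥ 2: f(w_r) − f(w*) ≤ 4 L D² / (r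 + 2). (This is the deterministic core of the paper's Proposition 14, the convergence guarantee for stochastic Frank–Wolfe, conditioned on the event that all gradient estimates satisfy the stated deviation bound.) -/
open Set Finset Filter

lemma grad_ineq {m : ℕ} {f : (Fin m → ℝ) → ℝ} (hconv : ConvexOn ℝ Set.univ f)
    (hdiff : Differentiable ℝ f) (x y : Fin m → ℝ) :
    fderiv ℝ f x (y - x) ≤ f y - f x := by
  set d : Fin m → ℝ := y - x with hd
  set φ : ℝ → ℝ := fun t => f (x + t • d) with hφ
  have hline : ∀ t : ℝ, x + t • d = AffineMap.lineMap x y t := by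
    intro t
    rw [AffineMap.lineMap_apply_module]
    funext i
    simp [hd, Pi.sub_apply]
    ring
  have hφconv : ConvexOn ℝ Set.univ φ := by
    have H := hconv.comp_affineMap (AffineMap.lineMap x y : ℝ →ᵃ[ℝ] (Fin m → ℝ))
    have : ((AffineMap.lineMap x y : ℝ →ᵃ[ℝ] (Fin m → ℝ)) ⁻¹' (Set.univ : Set (Fin m → ℝ))) = Set.univ := by simp
    rw [this] at H
    have hφeq : φ = f ∘ (AffineMap.lineMap x y : ℝ →ᵃ[ℝ] (Fin m → ℝ)) := by
      funext t
      show f (x + t • d) = f (AffineMap.lineMap x y t)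
      rw [hline t]
    rw [hφeq]; exact H
  have h1 : HasDerivAt (fun t : ℝ => x + t • d) d 0 := by
    simpa using ((hasDerivAt_id (0:ℝ)).smul_const d).const_add x
  have h2 : HasDerivAt φ ((fderiv ℝ f x) d) 0 := by
    have h0 : x + (0:ℝ) • d = x := by simp
    have := (hdiff (x + (0:ℝ) • d)).hasFDerivAt.comp_hasDerivAt 0 h1
    rw [h0] at this
    exact this
  have H := hφconv.le_slope_of_hasDerivAt (Set.mem_univ (0:ℝ)) (Set.mem_univ 1) one_pos h2
  have hφ0 : φ 0 = f x := by simp [hφ]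
  have hφ1 : φ 1 = f y := by simp [hφ, hd]
  rw [slope_def_field, hφ0, hφ1] at H
  simpa using H

lemma gauss_sum (n : ℕ) : (∑ k ∈ Finset.range n, ((k:ℝ)+1)) = n*(n+1)/2 := by
  induction n with
  | zero => simp
  | succ n ih => rw [Finset.sum_range_succ, ih]; push_cast; ring

lemma descent {m : ℕ} {f : (Fin m → ℝ) → ℝ} {L : ℝ} (hL : 0 ≤ L)
    (hconv : ConvexOn ℝ Set.univ f) (hdiff : Differentiable ℝ f)
    (hsmooth : ∀ x y v : Fin m → ℝ,
      |fderiv ℝ f x v - fderiv ℝ f y v| ≤ L * (∑ i, |x i - y i|) * (∑ i, |v i|))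
    (x y : Fin m → ℝ) :
    f y ≤ f x + fderiv ℝ f x (y - x) + L/2 * (∑ i, |y i - x i|)^2 := by
  set d : Fin m → ℝ := y - x with hd
  set N : ℝ := ∑ i, |d i| with hN
  have hN0 : 0 ≤ N := Finset.sum_nonneg fun i _ => abs_nonneg _
  have hNd : (∑ i, |y i - x i|) = N := by
    rw [hN]; congr 1
  -- points on the segment
  set p : ℕ → ℕ → (Fin m → ℝ) := fun n k => x + ((k:ℝ)/(n:ℝ)) • d with hp
  have hdist : ∀ n k : ℕ, (∑ i, |p n k i - x i|) = ((k:ℝ)/(n:ℝ)) * N := by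
    intro n k
    have : ∀ i, |p n k i - x i| = ((k:ℝ)/(n:ℝ)) * |d i| := by
      intro i
      simp only [hp, Pi.add_apply, Pi.smul_apply, smul_eq_mul, add_sub_cancel_left]
      rw [abs_mul, abs_of_nonneg (by positivity : (0:ℝ) ≤ (k:ℝ)/(n:ℝ))]
    simp_rw [this]
    rw [← Finset.mul_sum, hN]
  have key : ∀ n : ℕ, 1 ≤ n →
      f y - f x ≤ fderiv ℝ f x d + L * N^2 / 2 * (1 + 1/(n:ℝ)) := by
    intro n hn
    have hnR : (0:ℝ) < n := by exact_mod_cast hn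
    have hstep : ∀ k : ℕ, p n (k+1) - p n k = ((1:ℝ)/(n:ℝ)) • d := by
      intro k
      funext i
      simp only [hp, Pi.sub_apply, Pi.add_apply, Pi.smul_apply, smul_eq_mul]
      push_cast
      field_simp
      ring
    have hterm : ∀ k ∈ Finset.range n, f (p n (k+1)) - f (p n k) ≤
        (1/(n:ℝ)) * fderiv ℝ f x d + L * N^2 * ((k:ℝ)+1) / (n:ℝ)^2 := by
      intro k hk
      have h1 : fderiv ℝ f (p n (k+1)) (p n k - p n (k+1)) ≤ f (p n k) - f (p n (k+1)) :=
        grad_ineq hconv hdiff _ _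
      have h2 : p n k - p n (k+1) = -(((1:ℝ)/(n:ℝ)) • d) := by
        rw [← hstep k]; abel
      rw [h2, map_neg] at h1
      have h3 : f (p n (k+1)) - f (p n k) ≤ fderiv ℝ f (p n (k+1)) (((1:ℝ)/(n:ℝ)) • d) := by
        linarith
      rw [map_smul, smul_eq_mul] at h3
      have h4 : fderiv ℝ f (p n (k+1)) d ≤ fderiv ℝ f x d + L * (((k:ℝ)+1)/(n:ℝ) * N) * N := by
        have := hsmooth (p n (k+1)) x d
        rw [hdist n (k+1)] at this
        push_cast at this ⊢
        have habs := (abs_le.mp this).2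
        rw [← hN] at habs
        linarith
      calc f (p n (k+1)) - f (p n k) ≤ (1/(n:ℝ)) * fderiv ℝ f (p n (k+1)) d := h3
        _ ≤ (1/(n:ℝ)) * (fderiv ℝ f x d + L * (((k:ℝ)+1)/(n:ℝ) * N) * N) := by
            apply mul_le_mul_of_nonneg_left h4 (by positivity)
        _ = (1/(n:ℝ)) * fderiv ℝ f x d + L * N^2 * ((k:ℝ)+1) / (n:ℝ)^2 := by
            field_simp
    have htele : f y - f x = ∑ k ∈ Finset.range n, (f (p n (k+1)) - f (p n k)) := by
      rw [Finset.sum_range_sub (fun k => f (p n k))]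
      have hpn : p n n = y := by
        funext i
        simp only [hp, Pi.add_apply, Pi.smul_apply, smul_eq_mul]
        rw [div_self (ne_of_gt hnR), one_mul]
        simp [hd]
      have hp0 : p n 0 = x := by
        funext i; simp [hp]
      rw [hpn, hp0]
    rw [htele]
    calc ∑ k ∈ Finset.range n, (f (p n (k+1)) - f (p n k))
        ≤ ∑ k ∈ Finset.range n, ((1/(n:ℝ)) * fderiv ℝ f x d + L * N^2 * ((k:ℝ)+1) / (n:ℝ)^2) :=
          Finset.sum_le_sum hterm
      _ = fderiv ℝ f x d + L * N^2 / (n:ℝ)^2 * ∑ k ∈ Finset.range n, ((k:ℝ)+1) := by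
          have hsum : ∑ k ∈ Finset.range n, L * N ^ 2 * ((k:ℝ) + 1) / (n:ℝ)^2
              = L * N^2 / (n:ℝ)^2 * ∑ k ∈ Finset.range n, ((k:ℝ)+1) := by
            rw [Finset.mul_sum]
            exact Finset.sum_congr rfl fun k _ => by ring
          rw [Finset.sum_add_distrib, Finset.sum_const, Finset.card_range,
            nsmul_eq_mul, hsum]
          field_simp
      _ = fderiv ℝ f x d + L * N^2 / 2 * (1 + 1/(n:ℝ)) := by
          rw [gauss_sum]
          field_simp
  have hlim : Filter.Tendsto (fun n : ℕ => fderiv ℝ f x d + L * N^2 / 2 * (1 + 1/(n:ℝ)))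
      Filter.atTop (nhds (fderiv ℝ f x d + L * N^2 / 2)) := by
    have h1 : Filter.Tendsto (fun n : ℕ => (1:ℝ) + 1/(n:ℝ)) Filter.atTop (nhds 1) := by
      simpa using (tendsto_const_nhds (x := (1:ℝ)) (f := Filter.atTop (α := ℕ))).add
        tendsto_one_div_atTop_nhds_zero_nat
    have h2 := h1.const_mul (L * N^2 / 2)
    rw [mul_one] at h2
    simpa using (tendsto_const_nhds (x := fderiv ℝ f x d) (f := Filter.atTop (α := ℕ))).add h2
  have hfin : f y - f x ≤ fderiv ℝ f x d + L * N^2 / 2 :=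
    ge_of_tendsto hlim (Filter.eventually_atTop.mpr ⟨1, key⟩)
  rw [hNd]
  linarith

lemma fw_arith {x c : ℝ} (hx : 1 ≤ x) (hc : 0 ≤ c) :
    (1 - 2/(x+1)) * (4 * c / (x + 2)) + c * (2/(x+1))^2 ≤ 4 * c / (x+3) := by
  have h1 : (0:ℝ) < x + 1 := by linarith
  have h2 : (0:ℝ) < x + 2 := by linarith
  have h3 : (0:ℝ) < x + 3 := by linarith
  have heq : 4 * c / (x+3)
      - ((1 - 2/(x+1)) * (4 * c / (x + 2)) + c * (2/(x+1))^2)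
      = 4 * c * (x - 1) / ((x+1)^2 * (x+2) * (x+3)) := by
    field_simp
    ring
  have hpos : 0 ≤ 4 * c * (x - 1) / ((x+1)^2 * (x+2) * (x+3)) := by
    apply div_nonneg
    · nlinarith
    · positivity
  linarith

/-- **Proposition 14 (deterministic core of stochastic Frank–Wolfe).** Let `Ω ⊆ ℝ^m` be
nonempty, compact and convex with `ℓ₁`-diameter at most `D`, and let `f` be convex and
differentiable with `‖∇f(x) - ∇f(y)‖_∞ ≤ L ‖x - y‖₁` (expressed by duality against all
directions `v`). If the iterates satisfy the Frank–Wolfe update with step sizes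
`q_r = 2/(r+1)`, where `v_r` minimizes `⟨g_r, ·⟩` over `Ω` and every gradient estimate
satisfies `‖g_r - ∇f(w_r)‖_∞ ≤ L D q_r / 2`, then `f(w_r) - f(w*) ≤ 4 L D² / (r + 2)`
for all `r ≥ 2`. -/
theorem frank_wolfe_convergence (m : ℕ) (hm : 1 ≤ m)
    (Ω : Set (Fin m → ℝ)) (hΩne : Ω.Nonempty) (hΩcomp : IsCompact Ω)
    (hΩconv : Convex ℝ Ω)
    (D L : ℝ) (hD : 0 ≤ D) (hL : 0 ≤ L)
    (hdiam : ∀ u ∈ Ω, ∀ u' ∈ Ω, ∑ i, |u i - u' i| ≤ D)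
    (f : (Fin m → ℝ) → ℝ) (hconv : ConvexOn ℝ Set.univ f)
    (hdiff : Differentiable ℝ f)
    (hsmooth : ∀ x y v : Fin m → ℝ,
      |fderiv ℝ f x v - fderiv ℝ f y v| ≤ L * (∑ i, |x i - y i|) * (∑ i, |v i|))
    (wstar : Fin m → ℝ) (hwstar : wstar ∈ Ω) (hmin : ∀ u ∈ Ω, f wstar ≤ f u)
    (w g v : ℕ → Fin m → ℝ)
    (hw : ∀ r : ℕ, 1 ≤ r → w r ∈ Ω)
    (hvmem : ∀ r : ℕ, 1 ≤ r → v r ∈ Ω)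
    (hvmin : ∀ r : ℕ, 1 ≤ r → ∀ u ∈ Ω, ∑ i, g r i * v r i ≤ ∑ i, g r i * u i)
    (hupd : ∀ r : ℕ, 1 ≤ r →
      w (r + 1) = fun i => (2 / ((r : ℝ) + 1)) * v r i +
        (1 - 2 / ((r : ℝ) + 1)) * w r i)
    (hdev : ∀ r : ℕ, 1 ≤ r → ∀ u : Fin m → ℝ,
      |(∑ i, g r i * u i) - fderiv ℝ f (w r) u| ≤
        L * D * (2 / ((r : ℝ) + 1)) / 2 * ∑ i, |u i|) :
    ∀ r : ℕ, 2 ≤ r → f (w r) - f wstar ≤ 4 * L * D ^ 2 / ((r : ℝ) + 2) := by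
  -- the one-step recursion
  have step : ∀ r : ℕ, 1 ≤ r →
      f (w (r+1)) - f wstar ≤ (1 - 2/((r:ℝ)+1)) * (f (w r) - f wstar)
        + L * D^2 * (2/((r:ℝ)+1))^2 := by
    intro r hr
    set q : ℝ := 2/((r:ℝ)+1) with hq
    have hrR : (1:ℝ) ≤ (r:ℝ) := by exact_mod_cast hr
    have hq0 : 0 < q := by rw [hq]; positivity
    have hq1 : q ≤ 1 := by
      rw [hq, div_le_one (by linarith)]; linarith
    -- update as a segment move
    have hwupd : w (r+1) - w r = q • (v r - w r) := by
      funext i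
      rw [hupd r hr]
      simp only [Pi.sub_apply, Pi.smul_apply, smul_eq_mul]
      ring
    -- ℓ¹ bounds
    have hvw : ∑ i, |v r i - w r i| ≤ D := hdiam _ (hvmem r hr) _ (hw r hr)
    have hvw0 : 0 ≤ ∑ i, |v r i - w r i| := Finset.sum_nonneg fun i _ => abs_nonneg _
    have hvs : ∑ i, |v r i - wstar i| ≤ D := hdiam _ (hvmem r hr) _ hwstar
    -- descent lemma
    have hdes := descent hL hconv hdiff hsmooth (w r) (w (r+1))
    have hdiff1 : ∀ i, w (r+1) i - w r i = q * (v r i - w r i) := by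
      intro i
      have := congrFun hwupd i
      simpa using this
    have hsum1 : ∑ i, |w (r+1) i - w r i| = q * ∑ i, |v r i - w r i| := by
      rw [Finset.mul_sum]
      refine Finset.sum_congr rfl fun i _ => ?_
      rw [hdiff1 i, abs_mul, abs_of_pos hq0]
    have hsum1' : ∑ i, |w (r+1) i - w r i| ≤ q * D := by
      rw [hsum1]; exact mul_le_mul_of_nonneg_left hvw hq0.le
    have hsq : (∑ i, |w (r+1) i - w r i|)^2 ≤ (q*D)^2 := by
      apply pow_le_pow_left₀ (Finset.sum_nonneg fun i _ => abs_nonneg _) hsum1'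
    have hfd1 : fderiv ℝ f (w r) (w (r+1) - w r) = q * fderiv ℝ f (w r) (v r - w r) := by
      rw [hwupd, map_smul, smul_eq_mul]
    -- bound fderiv f (w r) (v r - wstar)
    have hdevr := hdev r hr (v r - wstar)
    have hgsub : (∑ i, g r i * (v r - wstar) i)
        = (∑ i, g r i * v r i) - ∑ i, g r i * wstar i := by
      rw [← Finset.sum_sub_distrib]
      exact Finset.sum_congr rfl fun i _ => by simp [Pi.sub_apply]; ring
    have hgle : (∑ i, g r i * (v r - wstar) i) ≤ 0 := by
      rw [hgsub]
      have := hvmin r hr wstar hwstar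
      linarith
    have hdv : fderiv ℝ f (w r) (v r - wstar) ≤ L * D^2 * q / 2 := by
      have habs := (abs_le.mp hdevr).1
      have h2 : ∑ i, |(v r - wstar) i| ≤ D := by
        simpa [Pi.sub_apply] using hvs
      have h3 : L * D * q / 2 * ∑ i, |(v r - wstar) i| ≤ L * D * q / 2 * D := by
        apply mul_le_mul_of_nonneg_left h2 (by positivity)
      nlinarith [Finset.sum_nonneg (fun i (_ : i ∈ Finset.univ) => abs_nonneg ((v r - wstar) i))]
    -- gradient inequality at wstar
    have hgrad : fderiv ℝ f (w r) (wstar - w r) ≤ f wstar - f (w r) :=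
      grad_ineq hconv hdiff _ _
    -- split
    have hsplit : fderiv ℝ f (w r) (v r - w r)
        = fderiv ℝ f (w r) (v r - wstar) + fderiv ℝ f (w r) (wstar - w r) := by
      rw [← map_add]
      congr 1
      abel
    have hmain : fderiv ℝ f (w r) (v r - w r) ≤ L * D^2 * q / 2 + (f wstar - f (w r)) := by
      rw [hsplit]; exact add_le_add hdv hgrad
    -- put everything together
    have hfinal : f (w (r+1)) ≤ f (w r) + q * (L * D^2 * q / 2 + (f wstar - f (w r)))
        + L/2 * (q*D)^2 := by
      calc f (w (r+1)) ≤ f (w r) + fderiv ℝ f (w r) (w (r+1) - w r)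
            + L/2 * (∑ i, |w (r+1) i - w r i|)^2 := by
            simpa [Pi.sub_apply] using hdes
        _ ≤ f (w r) + q * fderiv ℝ f (w r) (v r - w r) + L/2 * (q*D)^2 := by
            rw [hfd1]
            have := mul_le_mul_of_nonneg_left hsq (by linarith : (0:ℝ) ≤ L/2)
            linarith
        _ ≤ f (w r) + q * (L * D^2 * q / 2 + (f wstar - f (w r))) + L/2 * (q*D)^2 := by
            have := mul_le_mul_of_nonneg_left hmain hq0.le
            linarith
    nlinarith [hfinal]
  -- induction
  intro r hr
  induction r, hr using Nat.le_induction with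
  | base =>
    have h2 := step 1 le_rfl
    norm_num at h2 ⊢
    linarith
  | succ r hr ih =>
    have hs := step r (by omega)
    have hrR : (2:ℝ) ≤ (r:ℝ) := by exact_mod_cast hr
    have hq' : 0 ≤ 1 - 2/((r:ℝ)+1) := by
      rw [sub_nonneg, div_le_one (by linarith)]; linarith
    have hih := ih
    have hmul : (1 - 2/((r:ℝ)+1)) * (f (w r) - f wstar)
        ≤ (1 - 2/((r:ℝ)+1)) * (4 * L * D ^ 2 / ((r:ℝ) + 2)) :=
      mul_le_mul_of_nonneg_left hih hq'
    have hcast : ((r:ℝ) + 1 + 2) = (r:ℝ) + 3 := by ring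
    push_cast
    rw [hcast]
    have harith := fw_arith (x := (r:ℝ)) (c := L * D^2) (by linarith) (by positivity)
    have hq2 : L * D ^ 2 * (2 / ((r:ℝ) + 1)) ^ 2 = (L * D^2) * (2/((r:ℝ)+1))^2 := by ring
    have h4c : 4 * L * D ^ 2 / ((r:ℝ) + 2) = 4 * (L * D^2) / ((r:ℝ) + 2) := by ring
    have h4c' : 4 * L * D ^ 2 / ((r:ℝ) + 3) = 4 * (L * D^2) / ((r:ℝ) + 3) := by ring
    rw [h4c] at hmul
    rw [h4c']
    linarith
end
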